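/- arXiv:1003.3685 — 13 statements merged into one kernel-verified Lean document; each statement's English description precedes it below -/
import Mathlib

section
/- Let S : ℕ → ℕ be defined by S(0) = 1 and, for k ≥ 1, S(k) = k + 1 + ∑_{i=1}^{k} i·S(k−i). Then for every k ≥ 1, S(k) ≡ 1 + ∑_{j=0}^{k−2} S(j) (mod 2). -/
theorem stmt_0 (S : ℕ → ℕ) (hS0 : S 0 = 1)
    (hS : ∀ k, 1 ≤ k → S k = k + 1 + ∑ i ∈ Finset.Icc 1 k, i * S (k - i)) :
    ∀ k, 1 ≤ k → S k ≡ 1 + ∑ j ∈ Finset.range (k - 1), S j [MOD 2] := by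
  have key : ∀ n, ∑ i ∈ Finset.Icc 1 n, i * S (n - i)
      = ∑ j ∈ Finset.range n, (n - j) * S j := by
    intro n
    rw [← Finset.Ico_add_one_right_eq_Icc, Finset.sum_Ico_eq_sum_range]
    have hn : n + 1 - 1 = n := by omega
    rw [hn, ← Finset.sum_range_reflect]
    apply Finset.sum_congr rfl
    intro j hj
    simp only [Finset.mem_range] at hj
    have h1 : 1 + (n - 1 - j) = n - j := by omega
    have h2 : n - (1 + (n - 1 - j)) = j := by omega
    rw [h2, h1]
  intro k hk
  match k, hk with
  | 1, _ =>
    have h := hS 1 (le_refl 1)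
    simp [key, hS0] at h
    simp [h, Nat.ModEq]
  | (m+2), _ =>
    have h1 := hS (m+2) (by omega)
    have h2 := hS (m+1) (by omega)
    rw [key] at h1 h2
    have hsplit : ∑ j ∈ Finset.range (m+2), (m+2-j) * S j
        = (∑ j ∈ Finset.range (m+1), (m+1-j) * S j)
          + (S (m+1) + ∑ j ∈ Finset.range (m+1), S j) := by
      have hterm : ∀ j ∈ Finset.range (m+2), (m+2-j) * S j = (m+1-j) * S j + S j := by
        intro j hj
        simp only [Finset.mem_range] at hj
        have : m + 2 - j = (m + 1 - j) + 1 := by omega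
        rw [this, add_mul, one_mul]
      rw [Finset.sum_congr rfl hterm, Finset.sum_add_distrib,
        Finset.sum_range_succ _ (m+1), Finset.sum_range_succ S (m+1)]
      simp
      omega
    rw [hsplit] at h1
    show S (m+2) % 2 = (1 + ∑ j ∈ Finset.range (m+2-1), S j) % 2
    have hm : m + 2 - 1 = m + 1 := by rfl
    rw [hm]
    omega
end

section
/- Let S : ℕ → ℕ be defined by S(0) = 1 and, for k ≥ 1, S(k) = k + 1 + ∑_{i=1}^{k} i·S(k−i). Then for every k ≥ 3, S(k) ≡ S(k−3) (mod 2). -/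
theorem stmt_1 (S : ℕ → ℕ) (hS0 : S 0 = 1)
    (hS : ∀ k, 1 ≤ k → S k = k + 1 + ∑ i ∈ Finset.Icc 1 k, i * S (k - i)) :
    ∀ k, 3 ≤ k → S k ≡ S (k - 3) [MOD 2] := by
  have icc : ∀ (f : ℕ → ℕ) (n : ℕ),
      ∑ i ∈ Finset.Icc 1 n, f i = ∑ i ∈ Finset.range n, f (1+i) := by
    intro f n
    rw [← Finset.Ico_add_one_right_eq_Icc, Finset.sum_Ico_eq_sum_range]
    simp
  have step : ∀ k, S (k+1) = 1 + S k + ∑ j ∈ Finset.range (k+1), S j := by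
    intro k
    match k with
    | 0 =>
      rw [hS 1 (by norm_num)]
      simp [hS0]
    | n+1 =>
      have h2 := hS (n+1) (by omega)
      have h1 := hS (n+2) (by omega)
      rw [icc] at h1 h2
      have e1 : ∑ i ∈ Finset.range (n+2), (1+i) * S (n+2-(1+i))
          = (∑ j ∈ Finset.range (n+2), S j)
            + ∑ i ∈ Finset.range (n+1), (1+i) * S (n+1-(1+i)) := by
        have hc : ∀ i ∈ Finset.range (n+2), (1+i) * S (n+2-(1+i))
            = S (n+2-1-i) + i * S (n+2-(1+i)) := by
          intro i hi
          have h : n+2-(1+i) = n+2-1-i := by omega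
          rw [h]; ring
        rw [Finset.sum_congr rfl hc, Finset.sum_add_distrib,
          Finset.sum_range_reflect (fun j => S j) (n+2)]
        congr 1
        rw [Finset.sum_range_succ']
        simp only [Nat.zero_mul, Nat.mul_zero, zero_mul, add_zero]
        apply Finset.sum_congr rfl
        intro i hi
        have h : n+2-(1+(i+1)) = n+1-(1+i) := by omega
        rw [h]; ring
      rw [e1] at h1
      show S (n+2) = 1 + S (n+1) + ∑ j ∈ Finset.range (n+2), S j
      omega
  intro k hk
  obtain ⟨m, rfl⟩ : ∃ m, k = m + 3 := ⟨k - 3, by omega⟩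
  show S (m+3) ≡ S (m+3-3) [MOD 2]
  have h3 : m+3-3 = m := by omega
  rw [h3]
  have s1 := step m
  have s2 := step (m+1)
  have s3 := step (m+2)
  rw [Finset.sum_range_succ (fun j => S j) (m+1)] at s2
  rw [Finset.sum_range_succ (fun j => S j) (m+2),
    Finset.sum_range_succ (fun j => S j) (m+1)] at s3
  have r1 : m+1+1 = m+2 := by omega
  have r2 : m+2+1 = m+3 := by omega
  rw [r1] at s2
  rw [r2, r1] at s3
  show S (m+3) % 2 = S m % 2
  omega
end

section
/- Let S : ℕ → ℕ be defined by S(0) = 1 and, for k ≥ 1, S(k) = k + 1 + ∑_{i=1}^{k} i·S(k−i). Then S(k) is odd if and only if k mod 3 ≠ 2. -/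
theorem stmt_2 (S : ℕ → ℕ) (hS0 : S 0 = 1)
    (hS : ∀ k, 1 ≤ k → S k = k + 1 + ∑ i ∈ Finset.Icc 1 k, i * S (k - i)) :
    ∀ k, Odd (S k) ↔ k % 3 ≠ 2 := by
  -- rewrite the recurrence with sums over `range`
  have hG : ∀ k, S k = k + 1 + ∑ i ∈ Finset.range k, (1 + i) * S (k - (1 + i)) := by
    intro k
    cases k with
    | zero => simp [hS0]
    | succ n =>
      rw [hS (n + 1) (by omega), ← Finset.Ico_add_one_right_eq_Icc, Finset.sum_Ico_eq_sum_range]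
      norm_num
  -- sum shift identity
  have hGstep : ∀ k, ∑ i ∈ Finset.range (k + 1), (1 + i) * S (k + 1 - (1 + i)) =
      (∑ j ∈ Finset.range (k + 1), S j) + ∑ i ∈ Finset.range k, (1 + i) * S (k - (1 + i)) := by
    intro k
    have h1 : ∀ i, (1 + i) * S (k + 1 - (1 + i)) = S (k - i) + i * S (k - i) := by
      intro i
      have : k + 1 - (1 + i) = k - i := by omega
      rw [this]; ring
    rw [Finset.sum_congr rfl (fun i _ => h1 i), Finset.sum_add_distrib]
    congr 1
    · rw [← Finset.sum_range_reflect S (k + 1)]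
      apply Finset.sum_congr rfl
      intro i _
      congr 1
    · rw [Finset.sum_range_succ' (fun i => i * S (k - i))]
      simp only [Nat.zero_mul, add_zero, Nat.sub_zero]
      apply Finset.sum_congr rfl
      intro i _
      have : k - (i + 1) = k - (1 + i) := by omega
      rw [this, Nat.add_comm i 1]
  -- one-step recurrence
  have hstep : ∀ k, S (k + 1) = S k + 1 + ∑ j ∈ Finset.range (k + 1), S j := by
    intro k
    have h1 := hG (k + 1)
    have h2 := hG k
    have h3 := hGstep k
    omega
  -- three-term recurrence
  have hrec : ∀ k, S (k + 2) + S k = 3 * S (k + 1) := by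
    intro k
    have h1 : S (k + 2) = S (k + 1) + 1 + ∑ j ∈ Finset.range (k + 1 + 1), S j := hstep (k + 1)
    have h2 := hstep k
    rw [Finset.sum_range_succ] at h1
    omega
  have hS1 : S 1 = 3 := by
    have h : S 1 = S 0 + 1 + ∑ j ∈ Finset.range 1, S j := hstep 0
    rw [Finset.sum_range_one, hS0] at h
    omega
  -- parity invariant
  have key : ∀ k, (S k % 2 = 1 ↔ k % 3 ≠ 2) ∧ (S (k + 1) % 2 = 1 ↔ (k + 1) % 3 ≠ 2) := by
    intro k
    induction k with
    | zero =>
      have h1 : S (0 + 1) = 3 := hS1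
      constructor <;> omega
    | succ n ih =>
      obtain ⟨ih1, ih2⟩ := ih
      have h : S (n + 1 + 1) + S n = 3 * S (n + 1) := hrec n
      exact ⟨ih2, by omega⟩
  intro k
  rw [Nat.odd_iff]
  exact (key k).1
end

section
/- Let N : ℕ → ℕ be defined by N(0) = 1 and, for k ≥ 1, N(k) = 1 + ∑_{i=1}^{k} i·N(k−i). Then for every k ≥ 1, N(k) ≡ ∑_{j=0}^{k−2} N(j) (mod 2). -/
theorem stmt_3 (N : ℕ → ℕ) (hN0 : N 0 = 1)
    (hN : ∀ k, 1 ≤ k → N k = 1 + ∑ i ∈ Finset.Icc 1 k, i * N (k - i)) :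
    ∀ k, 1 ≤ k → N k ≡ ∑ j ∈ Finset.range (k - 1), N j [MOD 2] := by
  -- Rewrite the recurrence as a sum over `range k`
  have key : ∀ k, 1 ≤ k → N k = 1 + ∑ j ∈ Finset.range k, (k - j) * N j := by
    intro k hk
    rw [hN k hk]
    congr 1
    refine Finset.sum_nbij' (fun i => k - i) (fun j => k - j) ?_ ?_ ?_ ?_ ?_
    · intro a ha
      simp only [Finset.mem_Icc] at ha
      simp only [Finset.mem_range]
      omega
    · intro a ha
      simp only [Finset.mem_range] at ha
      simp only [Finset.mem_Icc]
      omega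
    · intro a ha
      simp only [Finset.mem_Icc] at ha
      show k - (k - a) = a
      omega
    · intro a ha
      simp only [Finset.mem_range] at ha
      show k - (k - a) = a
      omega
    · intro a ha
      simp only [Finset.mem_Icc] at ha
      have : k - (k - a) = a := by omega
      rw [this]
  intro k hk
  rcases Nat.lt_or_ge k 2 with h2 | h2
  · -- k = 1
    have hk1 : k = 1 := by omega
    subst hk1
    have : N 1 = 2 := by
      rw [key 1 le_rfl]
      simp [hN0]
    rw [this]
    simp [Nat.ModEq]
  · -- k ≥ 2
    have hsum : ∑ j ∈ Finset.range k, (k - j) * N j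
        = ∑ j ∈ Finset.range (k - 1), (k - 1 - j) * N j + ∑ j ∈ Finset.range k, N j := by
      have step : ∑ j ∈ Finset.range k, (k - j) * N j
          = ∑ j ∈ Finset.range k, ((k - 1 - j) * N j + N j) := by
        apply Finset.sum_congr rfl
        intro j hj
        have hj' : j < k := Finset.mem_range.mp hj
        have : k - j = (k - 1 - j) + 1 := by omega
        rw [this, add_mul, one_mul]
      rw [step, Finset.sum_add_distrib]
      congr 1
      have hk1 : k = (k - 1) + 1 := by omega
      rw [hk1, Finset.sum_range_succ]
      simp
    have hrec : N k = 2 * N (k - 1) + ∑ j ∈ Finset.range (k - 1), N j := by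
      have h1 := key k hk
      have h2 := key (k - 1) (by omega)
      have h3 : ∑ j ∈ Finset.range k, N j
          = ∑ j ∈ Finset.range (k - 1), N j + N (k - 1) := by
        have hk1 : k = (k - 1) + 1 := by omega
        conv_lhs => rw [hk1, Finset.sum_range_succ]
      rw [h1, hsum, h3]
      omega
    rw [hrec]
    show (2 * N (k - 1) + _) % 2 = _ % 2
    omega
end

section
/- Let N : ℕ → ℕ be defined by N(0) = 1 and, for k ≥ 1, N(k) = 1 + ∑_{i=1}^{k} i·N(k−i). Then for every k ≥ 3, N(k) ≡ N(k−3) (mod 2). -/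
theorem stmt_4 (N : ℕ → ℕ) (hN0 : N 0 = 1)
    (hN : ∀ k, 1 ≤ k → N k = 1 + ∑ i ∈ Finset.Icc 1 k, i * N (k - i)) :
    ∀ k, 3 ≤ k → N k ≡ N (k - 3) [MOD 2] := by
  have h0 : ∀ k, N k = 1 + ∑ j ∈ Finset.range k, (k - j) * N j := by
    intro k
    rcases Nat.eq_zero_or_pos k with hk | hk
    · subst hk; simp [hN0]
    · rw [hN k hk]
      congr 1
      rw [show Finset.Icc 1 k = Finset.Ico 1 (k + 1) by rw [Finset.Ico_add_one_right_eq_Icc],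
        Finset.sum_Ico_eq_sum_range]
      rw [show k + 1 - 1 = k from rfl]
      rw [← Finset.sum_range_reflect (fun j => (k - j) * N j) k]
      apply Finset.sum_congr rfl
      intro i hi
      simp only [Finset.mem_range] at hi
      have h1 : k - (k - 1 - i) = 1 + i := by omega
      have h2 : k - 1 - i = k - (1 + i) := by omega
      rw [h1, h2]
  have hA : ∀ k, N (k + 1) = N k + ∑ j ∈ Finset.range (k + 1), N j := by
    intro k
    rw [h0 (k + 1), h0 k]
    have e1 : ∑ j ∈ Finset.range (k + 1), (k + 1 - j) * N j
        = ∑ j ∈ Finset.range (k + 1), ((k - j) * N j + N j) := by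
      apply Finset.sum_congr rfl
      intro j hj
      simp only [Finset.mem_range] at hj
      have : k + 1 - j = (k - j) + 1 := by omega
      rw [this]; ring
    rw [e1, Finset.sum_add_distrib, Finset.sum_range_succ (fun j => (k - j) * N j)]
    simp
    ring
  set S : ℕ → ℕ := fun k => ∑ j ∈ Finset.range (k + 1), N j with hSdef
  have hS : ∀ k, S (k + 1) = S k + N (k + 1) := by
    intro k
    simp [hSdef, Finset.sum_range_succ]
  have hA' : ∀ k, N (k + 1) = N k + S k := fun k => hA k
  have key : ∀ k, N (k + 3) % 2 = N k % 2 ∧ S (k + 3) % 2 = S k % 2 := by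
    intro k
    induction k with
    | zero =>
      have hS0 : S 0 = 1 := by simp [hSdef, hN0]
      have h1 : N 1 = N 0 + S 0 := hA' 0
      have h2 : N 2 = N 1 + S 1 := hA' 1
      have h3 : N 3 = N 2 + S 2 := hA' 2
      have s1 : S 1 = S 0 + N 1 := hS 0
      have s2 : S 2 = S 1 + N 2 := hS 1
      have s3 : S 3 = S 2 + N 3 := hS 2
      simp only [Nat.zero_add]
      constructor <;> omega
    | succ n ih =>
      have h1 : N (n + 1 + 3) = N (n + 3) + S (n + 3) := hA' (n + 3)
      have h2 : N (n + 1) = N n + S n := hA' n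
      have s1 : S (n + 1 + 3) = S (n + 3) + N (n + 1 + 3) := hS (n + 3)
      have s2 : S (n + 1) = S n + N (n + 1) := hS n
      constructor <;> omega
  intro k hk
  obtain ⟨m, rfl⟩ : ∃ m, k = m + 3 := ⟨k - 3, by omega⟩
  have := (key m).1
  simpa [Nat.ModEq, Nat.add_sub_cancel] using this
end

section
/- Let N : ℕ → ℕ be defined by N(0) = 1 and, for k ≥ 1, N(k) = 1 + ∑_{i=1}^{k} i·N(k−i). Then N(k) is odd if and only if k mod 3 ≠ 1. -/
theorem stmt_5 (N : ℕ → ℕ) (hN0 : N 0 = 1)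
    (hN : ∀ k, 1 ≤ k → N k = 1 + ∑ i ∈ Finset.Icc 1 k, i * N (k - i)) :
    ∀ k, Odd (N k) ↔ k % 3 ≠ 1 := by
  -- the recurrence holds for all k (including k = 0, where the sum is empty)
  have hN' : ∀ k, N k = 1 + ∑ i ∈ Finset.Icc 1 k, i * N (k - i) := by
    intro k
    rcases Nat.eq_zero_or_pos k with h | h
    · subst h; simp [hN0]
    · exact hN k h
  -- the simplified recurrence: N (k+1) = N k + ∑_{m < k+1} N m
  have hrec : ∀ k, N (k + 1) = N k + ∑ m ∈ Finset.range (k + 1), N m := by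
    intro k
    have h1 : ∑ i ∈ Finset.Icc 1 (k + 1), i * N (k + 1 - i)
        = ∑ j ∈ Finset.range (k + 1), (1 + j) * N (k - j) := by
      rw [← Finset.Ico_add_one_right_eq_Icc, Finset.sum_Ico_eq_sum_range]
      simp only [Nat.add_sub_cancel, Nat.succ_sub_one]
      apply Finset.sum_congr rfl
      intro j hj
      have h : k + 1 - (1 + j) = k - j := by omega
      rw [h]
    have h2 : ∑ j ∈ Finset.range (k + 1), (1 + j) * N (k - j)
        = (∑ j ∈ Finset.range (k + 1), j * N (k - j))
          + ∑ j ∈ Finset.range (k + 1), N (k - j) := by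
      rw [← Finset.sum_add_distrib]
      apply Finset.sum_congr rfl
      intro j hj; ring
    have h3 : ∑ j ∈ Finset.range (k + 1), j * N (k - j)
        = ∑ i ∈ Finset.Icc 1 k, i * N (k - i) := by
      rw [Finset.sum_range_succ' (fun j => j * N (k - j))]
      rw [← Finset.Ico_add_one_right_eq_Icc, Finset.sum_Ico_eq_sum_range]
      simp only [Nat.add_sub_cancel, Nat.zero_mul, Nat.add_zero]
      apply Finset.sum_congr rfl
      intro j hj
      ring_nf
    have h4 : ∑ j ∈ Finset.range (k + 1), N (k - j)
        = ∑ m ∈ Finset.range (k + 1), N m := by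
      have := Finset.sum_range_reflect (fun m => N m) (k + 1)
      simpa using this
    rw [hN' (k + 1), h1, h2, h3, h4, ← Nat.add_assoc, ← hN' k]
  -- joint induction on parity of N k and partial sums
  have key : ∀ k, (N k % 2 = 0 ↔ k % 3 = 1) ∧
      ((∑ m ∈ Finset.range k, N m) % 2 = 0 ↔ k % 3 = 0) := by
    intro k
    induction k with
    | zero => simp [hN0]
    | succ k ih =>
      obtain ⟨ih1, ih2⟩ := ih
      have hs : ∑ m ∈ Finset.range (k + 1), N m
          = (∑ m ∈ Finset.range k, N m) + N k := Finset.sum_range_succ _ _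
      have hr := hrec k
      rw [hs] at hr ⊢
      constructor
      · rw [hr]; omega
      · omega
  intro k
  rw [Nat.odd_iff]
  have := (key k).1
  omega
end

section
/- Let S : ℕ → ℕ be defined by S(0) = 1 and, for k ≥ 1, S(k) = k + 1 + ∑_{i=1}^{k} i·S(k−i). Let p ≥ 3 be an odd natural number and let k = ⌊(p−3)/4⌋. Then S(k) is odd if and only if p is not congruent to 1 or 11 modulo 12. -/
lemma reindex_aux (S : ℕ → ℕ) (k : ℕ) :
    ∑ i ∈ Finset.Icc 1 (k+1), i * S (k+1-i) = ∑ j ∈ Finset.range (k+1), (k+1-j) * S j := by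
  have h : Finset.Icc 1 (k+1) = Finset.Ico 1 (k+2) := by rw [← Finset.Ico_add_one_right_eq_Icc]; rfl
  rw [h, Finset.sum_Ico_eq_sum_range, ← Finset.sum_range_reflect]
  have h2 : k + 2 - 1 = k + 1 := by omega
  rw [h2]
  apply Finset.sum_congr rfl
  intro j hj
  simp only [Finset.mem_range] at hj
  have e1 : 1 + (k + 1 - 1 - j) = k + 1 - j := by omega
  rw [e1]
  have e2 : k + 1 - (k + 1 - j) = j := by omega
  rw [e2]

lemma closed_aux (S : ℕ → ℕ)
    (hS : ∀ k, 1 ≤ k → S k = k + 1 + ∑ i ∈ Finset.Icc 1 k, i * S (k - i)) (n : ℕ) :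
    S (n + 1) = n + 2 + ∑ j ∈ Finset.range (n+1), (n+1-j) * S j := by
  rw [hS (n+1) (by omega), reindex_aux]

lemma step_aux (S : ℕ → ℕ) (hS0 : S 0 = 1)
    (hS : ∀ k, 1 ≤ k → S k = k + 1 + ∑ i ∈ Finset.Icc 1 k, i * S (k - i)) (k : ℕ) :
    S (k + 1) = 1 + S k + ∑ j ∈ Finset.range (k+1), S j := by
  cases k with
  | zero =>
    have h1 := closed_aux S hS 0
    simp [hS0] at h1
    simp [h1, hS0, Finset.sum_range_succ]
  | succ m =>
    have h1 := closed_aux S hS (m+1)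
    have h2 := closed_aux S hS m
    have h3 : ∑ j ∈ Finset.range (m+2), (m+2-j) * S j
        = (∑ j ∈ Finset.range (m+1), (m+1-j) * S j) + ∑ j ∈ Finset.range (m+2), S j := by
      rw [Finset.sum_range_succ (fun j => (m+2-j) * S j)]
      have e : ∀ j ∈ Finset.range (m+1), (m+2-j) * S j = (m+1-j) * S j + S j := by
        intro j hj
        simp only [Finset.mem_range] at hj
        have : m + 2 - j = (m + 1 - j) + 1 := by omega
        rw [this]; ring
      rw [Finset.sum_congr rfl e, Finset.sum_add_distrib,
        Finset.sum_range_succ (fun j => S j) (m+1)]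
      have : m + 2 - (m + 1) = 1 := by omega
      rw [this]; ring
    rw [h1, h3, h2]; ring

lemma parity_aux (S : ℕ → ℕ) (hS0 : S 0 = 1)
    (hS : ∀ k, 1 ≤ k → S k = k + 1 + ∑ i ∈ Finset.Icc 1 k, i * S (k - i)) :
    ∀ k, S k % 2 = (if k % 3 = 2 then 0 else 1)
      ∧ (∑ j ∈ Finset.range (k+1), S j) % 2 = (if k % 3 = 0 then 1 else 0) := by
  intro k
  induction k with
  | zero => simp [hS0]
  | succ n ih =>
    obtain ⟨h1, h2⟩ := ih
    have hstep := step_aux S hS0 hS n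
    have hsum : (∑ j ∈ Finset.range (n+1+1), S j)
        = (∑ j ∈ Finset.range (n+1), S j) + S (n+1) := Finset.sum_range_succ _ _
    have hc : n % 3 = 0 ∨ n % 3 = 1 ∨ n % 3 = 2 := by omega
    rcases hc with hc | hc | hc
    · have e1 : (n+1) % 3 = 1 := by omega
      simp only [hc, e1] at h1 h2 ⊢
      norm_num at h1 h2 ⊢
      omega
    · have e1 : (n+1) % 3 = 2 := by omega
      simp only [hc, e1] at h1 h2 ⊢
      norm_num at h1 h2 ⊢
      omega
    · have e1 : (n+1) % 3 = 0 := by omega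
      simp only [hc, e1] at h1 h2 ⊢
      norm_num at h1 h2 ⊢
      omega

theorem stmt_8 (S : ℕ → ℕ) (hS0 : S 0 = 1)
    (hS : ∀ k, 1 ≤ k → S k = k + 1 + ∑ i ∈ Finset.Icc 1 k, i * S (k - i))
    (p : ℕ) (hp : 3 ≤ p) (hodd : Odd p) :
    Odd (S ((p - 3) / 4)) ↔ ¬(p % 12 = 1 ∨ p % 12 = 11) := by
  have h := (parity_aux S hS0 hS ((p - 3) / 4)).1
  rw [Nat.odd_iff] at hodd
  have hiff : ((p-3)/4) % 3 = 2 ↔ (p % 12 = 1 ∨ p % 12 = 11) := by omega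
  rw [Nat.odd_iff]
  constructor
  · intro h1 hx
    have hc := hiff.mpr hx
    rw [if_pos hc] at h
    omega
  · intro h1
    have hc : ¬(((p-3)/4) % 3 = 2) := fun hc => h1 (hiff.mp hc)
    rw [if_neg hc] at h
    exact h
end

section
/- Let N : ℕ → ℕ be defined by N(0) = 1 and, for k ≥ 1, N(k) = 1 + ∑_{i=1}^{k} i·N(k−i). Let p ≥ 3 be an odd natural number and let k = ⌊(p−1)/4⌋. Then N(k) is odd if and only if p is not congruent to 5 or 7 modulo 12. -/
theorem stmt_9 (N : ℕ → ℕ) (hN0 : N 0 = 1)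
    (hN : ∀ k, 1 ≤ k → N k = 1 + ∑ i ∈ Finset.Icc 1 k, i * N (k - i))
    (p : ℕ) (hp : 3 ≤ p) (hodd : Odd p) :
    Odd (N ((p - 1) / 4)) ↔ ¬(p % 12 = 5 ∨ p % 12 = 7) := by
  have hNk : ∀ k, N k = 1 + ∑ i ∈ Finset.Icc 1 k, i * N (k - i) := by
    intro k
    rcases Nat.eq_zero_or_pos k with h | h
    · subst h; simp [hN0]
    · exact hN k h
  have key : ∀ k, N (k + 1) = 2 * N k + ∑ j ∈ Finset.range k, N j := by
    intro k
    have h1 := hNk (k + 1)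
    rw [← Finset.Ico_add_one_right_eq_Icc, Finset.sum_Ico_eq_sum_range] at h1
    norm_num at h1
    have h2 : ∀ i ∈ Finset.range (k + 1),
        (1 + i) * N (k + 1 - (1 + i)) = i * N (k - i) + N (k - i) := by
      intro i _
      have : k + 1 - (1 + i) = k - i := by omega
      rw [this]; ring
    rw [Finset.sum_congr rfl h2, Finset.sum_add_distrib] at h1
    have h3 : ∑ i ∈ Finset.range (k + 1), i * N (k - i)
        = ∑ i ∈ Finset.Icc 1 k, i * N (k - i) := by
      rw [Finset.sum_range_succ', ← Finset.Ico_add_one_right_eq_Icc, Finset.sum_Ico_eq_sum_range]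
      simp only [Nat.add_sub_cancel, zero_mul, add_zero]
      apply Finset.sum_congr rfl
      intro i _
      have : k - (i + 1) = k - (1 + i) := by omega
      rw [this]; ring
    have h4 : ∑ i ∈ Finset.range (k + 1), N (k - i)
        = ∑ i ∈ Finset.range k, N i + N k := by
      have := Finset.sum_range_reflect (fun i => N i) (k + 1)
      simp only [Nat.add_sub_cancel] at this
      rw [this, Finset.sum_range_succ]
    rw [h3, h4] at h1
    rw [h1, hNk k]; ring
  -- parity claim
  have par : ∀ k, N k % 2 = (if k % 3 = 1 then 0 else 1) ∧
      (∑ j ∈ Finset.range k, N j) % 2 = (if k % 3 = 0 then 0 else 1) := by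
    intro k
    induction k with
    | zero => simp [hN0]
    | succ k ih =>
      obtain ⟨ih1, ih2⟩ := ih
      constructor
      · rw [key k]
        have h5 : (2 * N k + ∑ j ∈ Finset.range k, N j) % 2
            = (∑ j ∈ Finset.range k, N j) % 2 := by omega
        rw [h5, ih2]
        split_ifs <;> omega
      · rw [Finset.sum_range_succ, Nat.add_mod, ih1, ih2]
        split_ifs <;> omega
  have hpar := (par ((p - 1) / 4)).1
  rw [Nat.odd_iff]
  have hp2 : p % 2 = 1 := Nat.odd_iff.mp hodd
  constructor
  · intro h1 h2
    have : (p - 1) / 4 % 3 = 1 := by omega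
    rw [this] at hpar; simp at hpar; omega
  · intro h
    have : ¬ ((p - 1) / 4 % 3 = 1) := by omega
    rw [if_neg this] at hpar; omega
end

section
/- Let S, N : ℕ → ℕ be defined by S(0) = 1, S(k) = k + 1 + ∑_{i=1}^{k} i·S(k−i) for k ≥ 1, and N(0) = 1, N(k) = 1 + ∑_{i=1}^{k} i·N(k−i) for k ≥ 1. Let p ≥ 3 be an odd natural number, let k_S = ⌊(p−3)/4⌋ and k_N = ⌊(p−1)/4⌋. Then S(k_S) + N(k_N) is even if and only if p ≡ 3 (mod 12) or p ≡ 9 (mod 12). -/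
/-- Reindex the convolution sum. -/
lemma conv_reindex (f : ℕ → ℕ) (k : ℕ) :
    ∑ i ∈ Finset.Icc 1 k, i * f (k - i) = ∑ j ∈ Finset.range k, (k - j) * f j := by
  apply Finset.sum_nbij' (fun i => k - i) (fun j => k - j)
  · intro i hi; simp only [Finset.mem_Icc] at hi; simp only [Finset.mem_range]; omega
  · intro j hj; simp only [Finset.mem_range] at hj; simp only [Finset.mem_Icc]; omega
  · intro i hi; simp only [Finset.mem_Icc] at hi; omega
  · intro j hj; simp only [Finset.mem_range] at hj; omega
  · intro i hi; simp only [Finset.mem_Icc] at hi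
    have h2 : k - (k - i) = i := by omega
    simp [h2]

/-- Step lemma for the reindexed sum. -/
lemma conv_step (f : ℕ → ℕ) (k : ℕ) :
    ∑ j ∈ Finset.range (k + 1), (k + 1 - j) * f j
      = (∑ j ∈ Finset.range k, (k - j) * f j) + ∑ j ∈ Finset.range (k + 1), f j := by
  rw [Finset.sum_range_succ (fun j => (k + 1 - j) * f j),
      Finset.sum_range_succ (fun j => f j)]
  have h : ∑ j ∈ Finset.range k, (k + 1 - j) * f j
      = ∑ j ∈ Finset.range k, ((k - j) * f j + f j) := by
    apply Finset.sum_congr rfl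
    intro j hj
    simp only [Finset.mem_range] at hj
    have : k + 1 - j = (k - j) + 1 := by omega
    rw [this]; ring
  rw [h, Finset.sum_add_distrib]
  simp; ring

/-- The second-order recurrence for any function of this shape. -/
lemma rec3 (f g : ℕ → ℕ) (d : ℕ) (hg : ∀ k, g (k + 1) = g k + d)
    (hf : ∀ k, f k = g k + ∑ i ∈ Finset.Icc 1 k, i * f (k - i)) (k : ℕ) :
    f (k + 2) + f k = 3 * f (k + 1) := by
  have key : ∀ m, f (m + 1) = f m + d + ∑ j ∈ Finset.range (m + 1), f j := by
    intro m
    rw [hf (m + 1), hf m, conv_reindex, conv_reindex, hg m]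
    have := conv_step f m
    omega
  have h1 := key k
  have h2 := key (k + 1)
  rw [show k + 1 + 1 = k + 2 from rfl] at h2
  rw [Finset.sum_range_succ (fun j => f j) (k + 1)] at h2
  omega

/-- Parity pattern from the recurrence and base cases. -/
lemma parity3 (f : ℕ → ℕ) (r : ℕ → ℕ)
    (h0 : f 0 % 2 = r 0) (h1 : f 1 % 2 = r 1)
    (hr : ∀ m, r m ≤ 1 ∧ r (m + 3) = r m ∧ (r (m + 2) + r (m + 1) + r m) % 2 = 0)
    (hrec : ∀ k, f (k + 2) + f k = 3 * f (k + 1)) :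
    ∀ k, f k % 2 = r k := by
  have main : ∀ k, f k % 2 = r k ∧ f (k + 1) % 2 = r (k + 1) := by
    intro k
    induction k with
    | zero => exact ⟨h0, h1⟩
    | succ n ih =>
      refine ⟨ih.2, ?_⟩
      show f (n + 2) % 2 = r (n + 2)
      have hrec' := hrec n
      have hrn := hr n
      have hb1 := (hr (n + 1)).1
      have hb2 := (hr (n + 2)).1
      obtain ⟨ih1, ih2⟩ := ih
      omega
  exact fun k => (main k).1

theorem stmt_10 (S N : ℕ → ℕ) (hS0 : S 0 = 1)
    (hS : ∀ k, 1 ≤ k → S k = k + 1 + ∑ i ∈ Finset.Icc 1 k, i * S (k - i))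
    (hN0 : N 0 = 1)
    (hN : ∀ k, 1 ≤ k → N k = 1 + ∑ i ∈ Finset.Icc 1 k, i * N (k - i))
    (p : ℕ) (hp : 3 ≤ p) (hodd : Odd p) :
    Even (S ((p - 3) / 4) + N ((p - 1) / 4)) ↔ p % 12 = 3 ∨ p % 12 = 9 := by
  have hS' : ∀ k, S k = (k + 1) + ∑ i ∈ Finset.Icc 1 k, i * S (k - i) := by
    intro k
    rcases Nat.eq_zero_or_pos k with h | h
    · subst h; simpa using hS0
    · exact hS k h
  have hN' : ∀ k, N k = 1 + ∑ i ∈ Finset.Icc 1 k, i * N (k - i) := by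
    intro k
    rcases Nat.eq_zero_or_pos k with h | h
    · subst h; simpa using hN0
    · exact hN k h
  have hSrec := rec3 S (fun k => k + 1) 1 (fun k => rfl) hS'
  have hNrec := rec3 N (fun _ => 1) 0 (fun k => rfl) hN'
  have hS1 : S 1 = 3 := by rw [hS 1 le_rfl]; simp [hS0]
  have hN1 : N 1 = 2 := by rw [hN 1 le_rfl]; simp [hN0]
  have hrS : ∀ m : ℕ, (fun k => if k % 3 = 2 then (0:ℕ) else 1) m ≤ 1 ∧
      (fun k => if k % 3 = 2 then (0:ℕ) else 1) (m + 3)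
        = (fun k => if k % 3 = 2 then (0:ℕ) else 1) m ∧
      ((fun k => if k % 3 = 2 then (0:ℕ) else 1) (m + 2)
        + (fun k => if k % 3 = 2 then (0:ℕ) else 1) (m + 1)
        + (fun k => if k % 3 = 2 then (0:ℕ) else 1) m) % 2 = 0 := by
    intro m
    simp only
    have h3 : m % 3 = 0 ∨ m % 3 = 1 ∨ m % 3 = 2 := by omega
    have e3 : (m + 3) % 3 = m % 3 := by omega
    have e2 : (m + 2) % 3 = (m % 3 + 2) % 3 := by omega
    have e1 : (m + 1) % 3 = (m % 3 + 1) % 3 := by omega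
    rcases h3 with h | h | h <;> simp [e1, e2, e3, h]
  have hrN : ∀ m : ℕ, (fun k => if k % 3 = 1 then (0:ℕ) else 1) m ≤ 1 ∧
      (fun k => if k % 3 = 1 then (0:ℕ) else 1) (m + 3)
        = (fun k => if k % 3 = 1 then (0:ℕ) else 1) m ∧
      ((fun k => if k % 3 = 1 then (0:ℕ) else 1) (m + 2)
        + (fun k => if k % 3 = 1 then (0:ℕ) else 1) (m + 1)
        + (fun k => if k % 3 = 1 then (0:ℕ) else 1) m) % 2 = 0 := by
    intro m
    simp only
    have h3 : m % 3 = 0 ∨ m % 3 = 1 ∨ m % 3 = 2 := by omega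
    have e3 : (m + 3) % 3 = m % 3 := by omega
    have e2 : (m + 2) % 3 = (m % 3 + 2) % 3 := by omega
    have e1 : (m + 1) % 3 = (m % 3 + 1) % 3 := by omega
    rcases h3 with h | h | h <;> simp [e1, e2, e3, h]
  have hSpar := parity3 S (fun k => if k % 3 = 2 then 0 else 1)
    (by simp [hS0]) (by simp [hS1]) hrS hSrec
  have hNpar := parity3 N (fun k => if k % 3 = 1 then 0 else 1)
    (by simp [hN0]) (by simp [hN1]) hrN hNrec
  have hs := hSpar ((p - 3) / 4)
  have hn := hNpar ((p - 1) / 4)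
  rw [Nat.even_iff]
  rw [Nat.odd_iff] at hodd
  have hs' : ((p - 3) / 4) % 3 = 2 ∧ S ((p - 3) / 4) % 2 = 0 ∨
      ¬((p - 3) / 4) % 3 = 2 ∧ S ((p - 3) / 4) % 2 = 1 := by
    by_cases h : ((p - 3) / 4) % 3 = 2
    · left; simp [h] at hs; exact ⟨h, hs⟩
    · right; simp [h] at hs; exact ⟨h, hs⟩
  have hn' : ((p - 1) / 4) % 3 = 1 ∧ N ((p - 1) / 4) % 2 = 0 ∨
      ¬((p - 1) / 4) % 3 = 1 ∧ N ((p - 1) / 4) % 2 = 1 := by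
    by_cases h : ((p - 1) / 4) % 3 = 1
    · left; simp [h] at hn; exact ⟨h, hn⟩
    · right; simp [h] at hn; exact ⟨h, hn⟩
  omega
end

section
/- Call a finite subset P of {1, 2, ..., n} parity-alternating if, when its elements are listed in increasing order p_1 < p_2 < ... < p_m, one has p_j ≡ j (mod 2) for every j (so p_1 is odd, p_2 is even, and so on). For each k ≥ 0, let T(k) be the number of parity-alternating subsets of {1, 2, ..., 2k+1} of odd cardinality. Then T(0) = 1 and, for every k ≥ 1, T(k) = k + 1 + ∑_{i=1}^{k} i·T(k−i); equivalently, T(k) = S(k) for all k, where S(0) = 1 and S(k) = k + 1 + ∑_{i=1}^{k} i·S(k−i). -/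
open Finset

def alt (b : ℕ) (l : List ℕ) : Prop := ∀ j < l.length, l.getD j 0 % 2 = (j + b) % 2

instance (b l) : Decidable (alt b l) := by unfold alt; infer_instance

lemma alt_congr {b b' : ℕ} (h : b % 2 = b' % 2) (l : List ℕ) : alt b l ↔ alt b' l := by
  unfold alt
  constructor <;> intro H j hj <;> rw [H j hj] <;> omega

lemma alt_nil (b : ℕ) : alt b [] := by intro j hj; simp at hj

lemma alt_cons (b x : ℕ) (l : List ℕ) :
    alt b (x :: l) ↔ (x % 2 = b % 2 ∧ alt (b + 1) l) := by
  constructor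
  · intro H
    refine ⟨by have := H 0 (by simp); simpa using this, ?_⟩
    intro j hj
    have := H (j + 1) (by simp; omega)
    simp only [List.getD_cons_succ] at this
    rw [this]; omega
  · rintro ⟨h1, h2⟩ j hj
    cases j with
    | zero => simpa using h1
    | succ j =>
      have := h2 j (by simpa using hj)
      simp only [List.getD_cons_succ]
      rw [this]; omega

lemma alt_map_add (b p : ℕ) (l : List ℕ) :
    alt b (l.map (· + p)) ↔ alt (b + p) l := by
  unfold alt
  simp only [List.length_map]
  constructor <;> intro H j hj <;> have := H j hj
  · rw [List.getD_eq_getElem _ _ (by simpa using hj)] at this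
    rw [List.getD_eq_getElem _ _ hj]
    simp only [List.getElem_map] at this
    omega
  · rw [List.getD_eq_getElem _ _ hj] at this
    rw [List.getD_eq_getElem _ _ (by simpa using hj)]
    simp only [List.getElem_map]
    omega

lemma sort_insert_image (p : ℕ) (Q : Finset ℕ) (h0 : 0 ∉ Q) :
    (insert p (Q.image (· + p))).sort (· ≤ ·) = p :: ((Q.sort (· ≤ ·)).map (· + p)) := by
  have hinj : Function.Injective (fun x : ℕ => x + p) := add_left_injective p
  have hnd : ((Q.sort (· ≤ ·)).map (fun x => x + p)).Nodup := (Finset.sort_nodup _ _).map hinj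
  have hsorted : ((Q.sort (· ≤ ·)).map (fun x => x + p)).Pairwise (· ≤ ·) :=
    List.Pairwise.map _ (fun a b (h : a ≤ b) => by simpa using h) (Finset.pairwise_sort _ _)
  have himg : Q.image (fun x => x + p) = ((Q.sort (· ≤ ·)).map (fun x => x + p)).toFinset := by
    ext a
    simp only [Finset.mem_image, List.mem_toFinset, List.mem_map, Finset.mem_sort]
  have hsort : (Q.image (fun x => x + p)).sort (· ≤ ·) = (Q.sort (· ≤ ·)).map (fun x => x + p) := by
    rw [himg, (List.toFinset_sort _ hnd).mpr hsorted]
  have hpmem : p ∉ Q.image (fun x => x + p) := by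
    simp only [Finset.mem_image, not_exists]
    rintro x ⟨hx, hxp⟩
    have : x = 0 := by omega
    exact h0 (this ▸ hx)
  rw [show insert p (Q.image (· + p)) = insert p (Q.image (fun x => x + p)) from rfl]
  rw [Finset.sort_insert (· ≤ ·) (fun b hb => ?_) hpmem, hsort]
  simp only [Finset.mem_image] at hb
  obtain ⟨x, _, rfl⟩ := hb
  omega

def PAF (c n : ℕ) : Finset (Finset ℕ) :=
  (Finset.Icc 1 n).powerset.filter (fun P => alt 1 (P.sort (· ≤ ·)) ∧ P.card % 2 = c)

lemma mem_PAF {c n : ℕ} {P : Finset ℕ} :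
    P ∈ PAF c n ↔ P ⊆ Finset.Icc 1 n ∧ alt 1 (P.sort (· ≤ ·)) ∧ P.card % 2 = c := by
  simp [PAF, Finset.mem_filter, Finset.mem_powerset, and_assoc]

lemma fiber_card {c p n : ℕ} (hc : c < 2) (hp2 : p % 2 = 1) (hpn : p ≤ n) :
    ((PAF c n).filter (fun P => (P.sort (· ≤ ·)).headI = p)).card = (PAF ((c + 1) % 2) (n - p)).card := by
  symm
  apply Finset.card_bij (fun Q _ => insert p (Q.image (fun x => x + p)))
  · -- maps into
    intro Q hQ
    rw [mem_PAF] at hQ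
    obtain ⟨hQsub, hQalt, hQcard⟩ := hQ
    have h0 : 0 ∉ Q := fun h => by have := hQsub h; simp [Finset.mem_Icc] at this
    have hpni : p ∉ Q.image (fun x => x + p) := by
      simp only [Finset.mem_image, not_exists]
      rintro x ⟨hx, hxp⟩
      have : x = 0 := by omega
      exact h0 (this ▸ hx)
    have hsortP := sort_insert_image p Q h0
    rw [Finset.mem_filter]
    constructor
    · rw [mem_PAF]
      refine ⟨?_, ?_, ?_⟩
      · intro x hx
        rcases Finset.mem_insert.mp hx with rfl | hx
        · simp [Finset.mem_Icc]; omega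
        · obtain ⟨y, hy, rfl⟩ := Finset.mem_image.mp hx
          have := hQsub hy
          simp only [Finset.mem_Icc] at this ⊢
          omega
      · rw [hsortP, alt_cons]
        refine ⟨by omega, ?_⟩
        rw [show ((Q.sort (· ≤ ·)).map (· + p)) = ((Q.sort (· ≤ ·)).map (fun x => x + p)) from rfl,
          alt_map_add]
        exact (alt_congr (by omega) _).mpr hQalt
      · rw [Finset.card_insert_of_notMem hpni,
          Finset.card_image_of_injective _ (add_left_injective p)]
        omega
    · rw [hsortP]; rfl
  · -- injective
    intro Q1 h1 Q2 h2 heq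
    have h01 : 0 ∉ Q1 := fun h => by
      have := (mem_PAF.mp h1).1 h; simp [Finset.mem_Icc] at this
    have h02 : 0 ∉ Q2 := fun h => by
      have := (mem_PAF.mp h2).1 h; simp [Finset.mem_Icc] at this
    have := congrArg (fun S : Finset ℕ => S.sort (· ≤ ·)) heq
    simp only [sort_insert_image p _ h01, sort_insert_image p _ h02] at this
    have hmap := List.cons.injEq .. ▸ this
    have : (Q1.sort (· ≤ ·)).map (· + p) = (Q2.sort (· ≤ ·)).map (· + p) := (List.cons.inj this).2
    have hs : Q1.sort (· ≤ ·) = Q2.sort (· ≤ ·) :=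
      List.map_injective_iff.mpr (add_left_injective p) this
    have := congrArg List.toFinset hs
    rwa [Finset.sort_toFinset, Finset.sort_toFinset] at this
  · -- surjective
    intro P hP
    rw [Finset.mem_filter, mem_PAF] at hP
    obtain ⟨⟨hPsub, hPalt, hPcard⟩, hhead⟩ := hP
    -- P.sort = p :: t'
    obtain ⟨t', hl⟩ : ∃ t', P.sort (· ≤ ·) = p :: t' := by
      cases h : P.sort (· ≤ ·) with
      | nil => rw [h] at hhead; simp at hhead; omega
      | cons a t' =>
        rw [h] at hhead
        simp at hhead
        exact ⟨t', by rw [hhead]⟩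
    have hslt : (P.sort (· ≤ ·)).Pairwise (· < ·) := List.sortedLT_iff_pairwise.mp (Finset.sortedLT_sort P)
    rw [hl] at hslt
    have hgt : ∀ x ∈ t', p < x := fun x hx => (List.pairwise_cons.mp hslt).1 x hx
    have ht'lt : t'.Pairwise (· < ·) := (List.pairwise_cons.mp hslt).2
    have hmapnd : (t'.map (fun x => x - p)).Pairwise (· < ·) := by
      rw [List.pairwise_map]
      exact ht'lt.imp_of_mem (fun ha hb hab => by
        have := hgt _ ha; have := hgt _ hb; omega)
    have hnd : (t'.map (fun x => x - p)).Nodup := hmapnd.nodup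
    have hle : (t'.map (fun x => x - p)).Pairwise (· ≤ ·) := hmapnd.imp le_of_lt
    have hQsort : ((t'.map (fun x => x - p)).toFinset).sort (· ≤ ·) = t'.map (fun x => x - p) :=
      (List.toFinset_sort _ hnd).mpr hle
    have hback : (t'.map (fun x => x - p)).map (fun x => x + p) = t' := by
      rw [List.map_map]
      have h1 : ∀ x ∈ t', ((fun x => x + p) ∘ fun x => x - p) x = id x := fun x hx => by
        have := hgt x hx; simp; omega
      rw [List.map_congr_left h1, List.map_id]
    have hmemP : ∀ y ∈ t', y ∈ P := fun y hy =>
      (Finset.mem_sort (α := ℕ) (· ≤ ·)).mp (by rw [hl]; exact List.mem_cons_of_mem _ hy)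
    have hQimg : ((t'.map (fun x => x - p)).toFinset).image (fun x => x + p) = t'.toFinset := by
      ext a
      simp only [Finset.mem_image, List.mem_toFinset, List.mem_map]
      constructor
      · rintro ⟨x, ⟨y, hy, rfl⟩, rfl⟩
        have := hgt y hy
        have : y - p + p = y := by omega
        rw [this]; exact hy
      · intro ha
        exact ⟨a - p, ⟨a, ha, rfl⟩, by have := hgt a ha; omega⟩
    refine ⟨(t'.map (fun x => x - p)).toFinset, ?_, ?_⟩
    · rw [mem_PAF]
      refine ⟨?_, ?_, ?_⟩
      · intro x hx
        simp only [List.mem_toFinset, List.mem_map] at hx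
        obtain ⟨y, hy, rfl⟩ := hx
        have h1 := hPsub (hmemP y hy)
        have h2 := hgt y hy
        simp only [Finset.mem_Icc] at h1 ⊢
        omega
      · rw [hQsort]
        rw [hl, alt_cons] at hPalt
        have h2 : alt 2 t' := hPalt.2
        rw [← hback] at h2
        rw [show ((t'.map (fun x => x - p)).map (fun x => x + p))
            = ((t'.map (fun x => x - p)).map (· + p)) from rfl, alt_map_add] at h2
        exact (alt_congr (by omega) _).mpr h2
      · have hcQ : ((t'.map (fun x => x - p)).toFinset).card = t'.length := by
          rw [List.toFinset_card_of_nodup hnd, List.length_map]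
        have hcP : P.card = t'.length + 1 := by
          rw [← Finset.length_sort (· ≤ ·), hl]; rfl
        omega
    · rw [hQimg, ← List.toFinset_cons, ← hl, Finset.sort_toFinset]

lemma headI_mem_odds {c n : ℕ} {P : Finset ℕ} (hP : P ∈ PAF c n) (hne : P.Nonempty) :
    (P.sort (· ≤ ·)).headI ∈ (Finset.Icc 1 n).filter (· % 2 = 1) := by
  rw [mem_PAF] at hP
  obtain ⟨hsub, halt, -⟩ := hP
  cases h : P.sort (· ≤ ·) with
  | nil =>
    exfalso
    have := Finset.length_sort (α := ℕ) (· ≤ ·) (s := P)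
    rw [h] at this
    simp at this
    exact hne.card_pos.ne' (by omega)
  | cons a t =>
    have ha : a ∈ P := (Finset.mem_sort (α := ℕ) (· ≤ ·)).mp (by rw [h]; exact List.mem_cons_self)
    have hodd := halt 0 (by rw [h]; simp)
    rw [h] at hodd
    simp only [List.getD_cons_zero] at hodd
    simp only [Finset.mem_filter, List.headI]
    exact ⟨hsub ha, by omega⟩

lemma U_rec (n : ℕ) :
    (PAF 1 n).card = ∑ p ∈ (Finset.Icc 1 n).filter (· % 2 = 1), (PAF 0 (n - p)).card := by
  rw [Finset.card_eq_sum_card_fiberwise (f := fun P => (P.sort (· ≤ ·)).headI)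
    (t := (Finset.Icc 1 n).filter (· % 2 = 1))]
  · apply Finset.sum_congr rfl
    intro p hp
    simp only [Finset.mem_filter, Finset.mem_Icc] at hp
    have := fiber_card (c := 1) (p := p) (n := n) (by omega) (by omega) (by omega)
    simpa using this
  · intro P hP
    apply headI_mem_odds hP
    have := (mem_PAF.mp hP).2.2
    exact Finset.card_pos.mp (by omega)

lemma V_rec (n : ℕ) :
    (PAF 0 n).card = 1 + ∑ p ∈ (Finset.Icc 1 n).filter (· % 2 = 1), (PAF 1 (n - p)).card := by
  have h0 : (0 : ℕ) ∉ (Finset.Icc 1 n).filter (· % 2 = 1) := by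
    simp [Finset.mem_filter, Finset.mem_Icc]
  rw [Finset.card_eq_sum_card_fiberwise (f := fun P => (P.sort (· ≤ ·)).headI)
    (t := insert 0 ((Finset.Icc 1 n).filter (· % 2 = 1)))]
  · rw [Finset.sum_insert h0]
    congr 1
    · -- fiber over 0 is {∅}
      have : (PAF 0 n).filter (fun P => (P.sort (· ≤ ·)).headI = 0) = {∅} := by
        ext P
        simp only [Finset.mem_filter, Finset.mem_singleton]
        constructor
        · rintro ⟨hP, hh⟩
          by_contra hne
          have hne' : P.Nonempty := Finset.nonempty_iff_ne_empty.mpr hne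
          have := headI_mem_odds hP hne'
          rw [hh] at this
          simp [Finset.mem_filter, Finset.mem_Icc] at this
        · rintro rfl
          refine ⟨mem_PAF.mpr ⟨by simp, ?_, by simp⟩, by simp⟩
          intro j hj
          simp at hj
      rw [this]; simp
    · apply Finset.sum_congr rfl
      intro p hp
      simp only [Finset.mem_filter, Finset.mem_Icc] at hp
      have := fiber_card (c := 0) (p := p) (n := n) (by omega) (by omega) (by omega)
      simpa using this
  · intro P hP
    rcases Finset.eq_empty_or_nonempty P with rfl | hne
    · simp
    · exact Finset.mem_insert_of_mem (headI_mem_odds hP hne)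

def u (k : ℕ) : ℕ := (PAF 1 (2 * k + 1)).card
def v (i : ℕ) : ℕ := (PAF 0 (2 * i)).card

lemma odds_odd (k : ℕ) :
    (Finset.Icc 1 (2 * k + 1)).filter (· % 2 = 1) = (Finset.range (k + 1)).image (fun j => 2 * j + 1) := by
  ext p
  simp only [Finset.mem_filter, Finset.mem_Icc, Finset.mem_image, Finset.mem_range]
  constructor
  · rintro ⟨⟨h1, h2⟩, h3⟩
    exact ⟨(p - 1) / 2, by omega, by omega⟩
  · rintro ⟨j, hj, rfl⟩
    omega

lemma odds_even (k : ℕ) :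
    (Finset.Icc 1 (2 * k)).filter (· % 2 = 1) = (Finset.range k).image (fun j => 2 * j + 1) := by
  ext p
  simp only [Finset.mem_filter, Finset.mem_Icc, Finset.mem_image, Finset.mem_range]
  constructor
  · rintro ⟨⟨h1, h2⟩, h3⟩
    exact ⟨(p - 1) / 2, by omega, by omega⟩
  · rintro ⟨j, hj, rfl⟩
    omega

lemma u_eq_sum_v (k : ℕ) : u k = ∑ i ∈ Finset.range (k + 1), v i := by
  have := U_rec (2 * k + 1)
  rw [odds_odd k, Finset.sum_image (by intro x _ y _ h; simp only at h; omega)] at this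
  rw [u, this]
  rw [← Finset.sum_range_reflect (fun i => v i) (k + 1)]
  apply Finset.sum_congr rfl
  intro j hj
  simp only [Finset.mem_range] at hj
  have h1 : 2 * k + 1 - (2 * j + 1) = 2 * (k - j) := by omega
  have h2 : k + 1 - 1 - j = k - j := by omega
  rw [h1, h2, v]

lemma v_eq_sum_u (i : ℕ) : v i = 1 + ∑ m ∈ Finset.range i, u m := by
  have := V_rec (2 * i)
  rw [odds_even i, Finset.sum_image (by intro x _ y _ h; simp only at h; omega)] at this
  rw [v, this]
  congr 1
  rw [← Finset.sum_range_reflect (fun m => u m) i]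
  apply Finset.sum_congr rfl
  intro j hj
  simp only [Finset.mem_range] at hj
  have h1 : 2 * i - (2 * j + 1) = 2 * (i - 1 - j) + 1 := by omega
  rw [h1, u]

lemma double_sum (f : ℕ → ℕ) (k : ℕ) :
    ∑ i ∈ Finset.range (k + 1), ∑ m ∈ Finset.range i, f m
      = ∑ m ∈ Finset.range k, (k - m) * f m := by
  induction k with
  | zero => simp
  | succ k ih =>
    rw [Finset.sum_range_succ, ih]
    have h1 : ∑ m ∈ Finset.range (k + 1), (k + 1 - m) * f m
        = ∑ m ∈ Finset.range (k + 1), ((k - m) * f m + f m) := by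
      apply Finset.sum_congr rfl
      intro m hm
      simp only [Finset.mem_range] at hm
      have : k + 1 - m = (k - m) + 1 := by omega
      rw [this]; ring
    rw [h1, Finset.sum_add_distrib, Finset.sum_range_succ (fun m => (k - m) * f m)]
    simp

lemma u_master (k : ℕ) : u k = k + 1 + ∑ i ∈ Finset.Icc 1 k, i * u (k - i) := by
  have hs : ∑ i ∈ Finset.Icc 1 k, i * u (k - i) = ∑ m ∈ Finset.range k, (k - m) * u m := by
    apply Finset.sum_nbij' (fun i => k - i) (fun m => k - m)
    · intro i hi; simp only [Finset.mem_Icc] at hi; simp only [Finset.mem_range]; omega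
    · intro m hm; simp only [Finset.mem_range] at hm; simp only [Finset.mem_Icc]; omega
    · intro i hi; simp only [Finset.mem_Icc] at hi; omega
    · intro m hm; simp only [Finset.mem_range] at hm; omega
    · intro i hi; simp only [Finset.mem_Icc] at hi
      have : k - (k - i) = i := by omega
      rw [this]
  rw [hs, ← double_sum, u_eq_sum_v]
  have : ∀ i ∈ Finset.range (k + 1), v i = 1 + ∑ m ∈ Finset.range i, u m :=
    fun i _ => v_eq_sum_u i
  rw [Finset.sum_congr rfl this, Finset.sum_add_distrib]
  simp [add_comm]

/-- A finite set `P ⊆ {1, …, n}` is *parity-alternating* if, listing its elements in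
increasing order as `p₁ < p₂ < ⋯ < p_m`, one has `p_j ≡ j (mod 2)` for every `j`
(so `p₁` is odd, `p₂` is even, and so on). -/
def ParityAlternating (n : ℕ) (P : Finset ℕ) : Prop :=
  P ⊆ Finset.Icc 1 n ∧
    ∀ j : Fin (P.sort (· ≤ ·)).length, (P.sort (· ≤ ·)).get j % 2 = (j.val + 1) % 2

/-- The number of parity-alternating subsets of `{1, …, 2k+1}` of odd cardinality. -/
noncomputable def Tcount (k : ℕ) : ℕ :=
  Nat.card {P : Finset ℕ // ParityAlternating (2 * k + 1) P ∧ Odd P.card}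

lemma PA_iff (n : ℕ) (P : Finset ℕ) :
    ParityAlternating n P ↔ (P ⊆ Finset.Icc 1 n ∧ alt 1 (P.sort (· ≤ ·))) := by
  unfold ParityAlternating alt
  apply and_congr Iff.rfl
  constructor
  · intro h j hj
    have := h ⟨j, hj⟩
    rw [List.getD_eq_getElem _ _ hj]
    simpa [List.get_eq_getElem] using this
  · intro h j
    have := h j.val j.isLt
    rw [List.getD_eq_getElem _ _ j.isLt] at this
    simpa [List.get_eq_getElem] using this

lemma Tcount_eq (k : ℕ) : Tcount k = u k := by
  have hiff : ∀ P : Finset ℕ,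
      (ParityAlternating (2 * k + 1) P ∧ Odd P.card) ↔ P ∈ PAF 1 (2 * k + 1) := by
    intro P
    rw [mem_PAF, PA_iff, Nat.odd_iff, and_assoc]
  rw [Tcount, Nat.card_congr (Equiv.subtypeEquivRight hiff), Nat.card_eq_finsetCard]
  rfl

theorem stmt_11 :
    (Tcount 0 = 1 ∧
      ∀ k, 1 ≤ k → Tcount k = k + 1 + ∑ i ∈ Finset.Icc 1 k, i * Tcount (k - i)) ∧
    ∀ S : ℕ → ℕ, S 0 = 1 →
      (∀ k, 1 ≤ k → S k = k + 1 + ∑ i ∈ Finset.Icc 1 k, i * S (k - i)) →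
      ∀ k, Tcount k = S k := by
  have hT : ∀ k, Tcount k = k + 1 + ∑ i ∈ Finset.Icc 1 k, i * Tcount (k - i) := by
    intro k
    rw [Tcount_eq, u_master]
    congr 1
    apply Finset.sum_congr rfl
    intro i _
    rw [Tcount_eq]
  have hT0 : Tcount 0 = 1 := by
    have := hT 0
    simpa using this
  refine ⟨⟨hT0, fun k _ => hT k⟩, ?_⟩
  intro S hS0 hSrec k
  induction k using Nat.strong_induction_on with
  | _ k ih =>
    rcases Nat.eq_zero_or_pos k with rfl | hk
    · rw [hT0, hS0]
    · rw [hT k, hSrec k hk]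
      congr 1
      apply Finset.sum_congr rfl
      intro i hi
      simp only [Finset.mem_Icc] at hi
      rw [ih (k - i) (by omega)]
end

section
/- Call a finite subset P of {1, 2, ..., n} parity-alternating if, when its elements are listed in increasing order p_1 < p_2 < ... < p_m, one has p_j ≡ j (mod 2) for every j (so p_1 is odd, p_2 is even, and so on). For each k ≥ 0, let M(k) be the number of parity-alternating subsets of {1, 2, ..., 2k} of even cardinality (including the empty set). Then M(0) = 1 and, for every k ≥ 1, M(k) = 1 + ∑_{i=1}^{k} i·M(k−i); equivalently, M(k) = N(k) for all k, where N(0) = 1 and N(k) = 1 + ∑_{i=1}^{k} i·N(k−i). -/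
/-- The number of parity-alternating subsets of `{1, …, 2k}` of even cardinality
(including the empty set). -/
noncomputable def Mcount (k : ℕ) : ℕ :=
  Nat.card {P : Finset ℕ // ParityAlternating (2 * k) P ∧ Even P.card}

section Aux

lemma sort_image_add (s : Finset ℕ) (c : ℕ) :
    (s.image (· + c)).sort (· ≤ ·) = (s.sort (· ≤ ·)).map (· + c) := by
  refine (fun hp h1 h2 => List.Perm.eq_of_pairwise' (r := (· ≤ ·)) h1 h2 hp) ?_ ?_ ?_
  · rw [← Multiset.coe_eq_coe]
    rw [Finset.sort_eq, ← Multiset.map_coe, Finset.sort_eq]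
    exact Finset.image_val_of_injOn (fun x _ y _ h => by omega)
  · exact Finset.pairwise_sort _ _
  · have := (Finset.sortedLT_sort s).pairwise
    rw [List.pairwise_map]
    exact this.imp (fun h => by omega)

/-- List-level characterization of parity-alternating sets of even cardinality. -/
def AltL (n : ℕ) (l : List ℕ) : Prop :=
  l.Pairwise (· < ·) ∧ (∀ x ∈ l, x ≤ n) ∧
    (∀ i (h : i < l.length), l.get ⟨i, h⟩ % 2 = (i + 1) % 2) ∧ Even l.length

lemma AltL.pos' {n : ℕ} {l : List ℕ} (h : AltL n l) : ∀ x ∈ l, 1 ≤ x := by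
  intro x hx
  obtain ⟨i, hi⟩ := List.get_of_mem hx
  by_contra hx0
  have h0 : x = 0 := by omega
  have hpar := h.2.2.1 i.1 i.2
  rw [hi] at hpar
  have hi1 : 1 ≤ i.1 := by omega
  have : l.get ⟨0, by omega⟩ < l.get i := h.1.sortedLT.strictMono_get (Fin.lt_def.2 hi1)
  omega

lemma pa_iff (n : ℕ) (P : Finset ℕ) :
    (ParityAlternating n P ∧ Even P.card) ↔ AltL n (P.sort (· ≤ ·)) := by
  constructor
  · rintro ⟨⟨hsub, hpar⟩, heven⟩
    refine ⟨(Finset.sortedLT_sort P).pairwise, ?_, fun i h => hpar ⟨i, h⟩, ?_⟩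
    · intro x hx
      exact (Finset.mem_Icc.1 (hsub ((Finset.mem_sort _).1 hx))).2
    · rwa [Finset.length_sort]
  · rintro ⟨hs, hle, hpar, heven⟩
    have hpos := AltL.pos' ⟨hs, hle, hpar, heven⟩
    refine ⟨⟨?_, fun j => hpar j.1 j.2⟩, by rwa [Finset.length_sort] at heven⟩
    intro x hx
    have hx' : x ∈ P.sort (· ≤ ·) := (Finset.mem_sort _).2 hx
    exact Finset.mem_Icc.2 ⟨hpos x hx', hle x hx'⟩

lemma AltL.cons' {k a b : ℕ} {l : List ℕ} (ha : 1 ≤ a) (hab : a ≤ b) (hbk : b ≤ k)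
    (h : AltL (2 * (k - b)) l) :
    AltL (2 * k) ((2 * a - 1) :: (2 * b) :: l.map (· + 2 * b)) := by
  obtain ⟨hs, hle, hpar, heven⟩ := h
  have hpos := AltL.pos' ⟨hs, hle, hpar, heven⟩
  refine ⟨?_, ?_, ?_, ?_⟩
  · refine List.pairwise_cons.2 ⟨?_, List.pairwise_cons.2 ⟨?_, ?_⟩⟩
    · intro x hx
      rcases List.mem_cons.1 hx with rfl | hx
      · omega
      · obtain ⟨y, hy, rfl⟩ := List.mem_map.1 hx
        have := hpos y hy; omega
    · intro x hx
      obtain ⟨y, hy, rfl⟩ := List.mem_map.1 hx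
      have := hpos y hy; omega
    · rw [List.pairwise_map]
      exact hs.imp (fun h => by omega)
  · intro x hx
    rcases List.mem_cons.1 hx with rfl | hx
    · omega
    rcases List.mem_cons.1 hx with rfl | hx
    · omega
    obtain ⟨y, hy, rfl⟩ := List.mem_map.1 hx
    have := hle y hy; omega
  · intro i hi
    match i with
    | 0 => simp; omega
    | 1 => simp
    | (j+2) =>
      have hj : j < l.length := by simpa using hi
      have heq : ((2 * a - 1) :: (2 * b) :: l.map (· + 2 * b)).get ⟨j + 2, hi⟩
          = (l.map (· + 2 * b)).get ⟨j, by simpa using hj⟩ := rfl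
      rw [heq]
      simp only [List.get_eq_getElem, List.getElem_map]
      have hp := hpar j hj
      simp only [List.get_eq_getElem] at hp
      omega
  · obtain ⟨m, hm⟩ := heven
    exact ⟨m + 1, by simp only [List.length_cons, List.length_map]; omega⟩

lemma AltL.decomp' {k : ℕ} {x y : ℕ} {t : List ℕ}
    (h : AltL (2 * k) (x :: y :: t)) :
    ∃ a b, 1 ≤ a ∧ a ≤ b ∧ b ≤ k ∧ x = 2 * a - 1 ∧ y = 2 * b ∧
      AltL (2 * (k - b)) (t.map (· - 2 * b)) ∧
      (t.map (· - 2 * b)).map (· + 2 * b) = t := by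
  obtain ⟨hs, hle, hpar, heven⟩ := h
  have hx : x % 2 = 1 % 2 := hpar 0 (by simp)
  have hy : y % 2 = (1 + 1) % 2 := hpar 1 (by simp)
  have hxy : x < y := (List.pairwise_cons.1 hs).1 y (by simp)
  have hyt : ∀ z ∈ t, y < z := fun z hz =>
    (List.pairwise_cons.1 (List.pairwise_cons.1 hs).2).1 z hz
  have hst : t.Pairwise (· < ·) := (List.pairwise_cons.1 (List.pairwise_cons.1 hs).2).2
  have hyk : y ≤ 2 * k := hle y (by simp)
  have hy2 : 2 * (y / 2) = y := by omega
  refine ⟨(x + 1) / 2, y / 2, by omega, by omega, by omega, by omega, by omega, ?_, ?_⟩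
  · rw [hy2]
    refine ⟨?_, ?_, ?_, ?_⟩
    · rw [List.pairwise_map]
      refine (hst.imp_of_mem ?_)
      intro u v hu hv huv
      have := hyt u hu; omega
    · intro z hz
      obtain ⟨u, hu, rfl⟩ := List.mem_map.1 hz
      have h1 := hle u (by simp [hu])
      have h2 := hyt u hu
      omega
    · intro i hi
      have hi' : i < t.length := by simpa using hi
      have hp : t.get ⟨i, hi'⟩ % 2 = (i + 2 + 1) % 2 :=
        hpar (i + 2) (by simp; omega)
      simp only [List.get_eq_getElem, List.getElem_map]
      simp only [List.get_eq_getElem] at hp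
      have := hyt t[i] (List.getElem_mem hi')
      omega
    · simp only [List.length_map]
      simp only [List.length_cons] at heven
      obtain ⟨m, hm⟩ := heven
      exact ⟨m - 1, by omega⟩
  · rw [hy2, List.map_map]
    refine (List.map_congr_left ?_).trans (List.map_id t)
    intro u hu
    have := hyt u hu
    simp; omega

/-- The finset of parity-alternating subsets of `{1, …, 2k}` of even cardinality. -/
noncomputable def Tk (k : ℕ) : Finset (Finset ℕ) :=
  @Finset.filter _ (fun P => AltL (2 * k) (P.sort (· ≤ ·))) (Classical.decPred _)
    (Finset.Icc 1 (2 * k)).powerset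

lemma mem_Tk {k : ℕ} {P : Finset ℕ} : P ∈ Tk k ↔ AltL (2 * k) (P.sort (· ≤ ·)) := by
  rw [Tk, @Finset.mem_filter _ _ (Classical.decPred _), Finset.mem_powerset]
  constructor
  · exact fun h => h.2
  · intro h
    refine ⟨fun x hx => ?_, h⟩
    have hx' : x ∈ P.sort (· ≤ ·) := (Finset.mem_sort _).2 hx
    exact Finset.mem_Icc.2 ⟨h.pos' x hx', h.2.1 x hx'⟩

def Fm (b a : ℕ) (Q : Finset ℕ) : Finset ℕ :=
  insert (2 * a - 1) (insert (2 * b) (Q.image (· + 2 * b)))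

lemma sort_Fm {k b a : ℕ} {Q : Finset ℕ} (ha : 1 ≤ a) (hab : a ≤ b)
    (hQ : Q ∈ Tk k) :
    (Fm b a Q).sort (· ≤ ·) =
      (2 * a - 1) :: (2 * b) :: ((Q.sort (· ≤ ·)).map (· + 2 * b)) := by
  have hpos : ∀ x ∈ Q, 1 ≤ x := fun x hx =>
    (mem_Tk.1 hQ).pos' x ((Finset.mem_sort _).2 hx)
  have h1 : (Fm b a Q).sort (· ≤ ·) =
      (2 * a - 1) :: (insert (2 * b) (Q.image (· + 2 * b))).sort (· ≤ ·) := by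
    apply Finset.sort_insert
    · intro z hz
      rcases Finset.mem_insert.1 hz with rfl | hz
      · omega
      · obtain ⟨q, hq, rfl⟩ := Finset.mem_image.1 hz
        have := hpos q hq; omega
    · intro hz
      rcases Finset.mem_insert.1 hz with h | h
      · omega
      · obtain ⟨q, hq, hq'⟩ := Finset.mem_image.1 h
        have := hpos q hq; omega
  have h2 : (insert (2 * b) (Q.image (· + 2 * b))).sort (· ≤ ·) =
      (2 * b) :: (Q.image (· + 2 * b)).sort (· ≤ ·) := by
    apply Finset.sort_insert
    · intro z hz
      obtain ⟨q, hq, rfl⟩ := Finset.mem_image.1 hz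
      have := hpos q hq; omega
    · intro hz
      obtain ⟨q, hq, hq'⟩ := Finset.mem_image.1 hz
      have := hpos q hq; omega
  rw [h1, h2, sort_image_add]

lemma sort_inj {P Q : Finset ℕ} (h : P.sort (· ≤ ·) = Q.sort (· ≤ ·)) : P = Q := by
  rw [← Finset.sort_toFinset P (· ≤ ·), ← Finset.sort_toFinset Q (· ≤ ·), h]

lemma Tk_zero : Tk 0 = {∅} := by
  ext P
  rw [mem_Tk, Finset.mem_singleton]
  constructor
  · intro h
    have : ∀ x ∈ P, False := by
      intro x hx
      have hx' : x ∈ P.sort (· ≤ ·) := (Finset.mem_sort _).2 hx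
      have h1 := h.pos' x hx'
      have h2 := h.2.1 x hx'
      omega
    exact Finset.eq_empty_of_forall_notMem fun x hx => this x hx
  · rintro rfl
    rw [Finset.sort_empty]
    exact ⟨List.Pairwise.nil, by simp, fun i h => by simp at h, Even.zero⟩

lemma Tk_eq (k : ℕ) :
    Tk k = insert ∅ ((Finset.Icc 1 k).biUnion fun b => (Finset.Icc 1 b).biUnion fun a =>
      (Tk (k - b)).image (Fm b a)) := by
  ext P
  simp only [Finset.mem_insert, Finset.mem_biUnion, Finset.mem_image, Finset.mem_Icc]
  constructor
  · intro hP
    rcases eq_or_ne P ∅ with rfl | hne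
    · left; rfl
    right
    have hAlt := mem_Tk.1 hP
    rcases hl : P.sort (· ≤ ·) with _ | ⟨x, _ | ⟨y, t⟩⟩
    · exact absurd (sort_inj (by rw [hl, Finset.sort_empty])) hne
    · rw [hl] at hAlt
      exact absurd hAlt.2.2.2 (by simp [Nat.not_even_one])
    · rw [hl] at hAlt
      obtain ⟨a, b, ha, hab, hbk, hx, hy, hAlt', hmap⟩ := hAlt.decomp'
      refine ⟨b, ⟨by omega, hbk⟩, a, ⟨ha, hab⟩, ?_⟩
      set Q : Finset ℕ := (t.map (· - 2 * b)).toFinset with hQdef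
      have hnodup : (t.map (· - 2 * b)).Nodup := hAlt'.1.nodup
      have hsortQ : Q.sort (· ≤ ·) = t.map (· - 2 * b) :=
        (List.toFinset_sort _ hnodup).2 (hAlt'.1.imp le_of_lt)
      have hQT : Q ∈ Tk (k - b) := mem_Tk.2 (hsortQ ▸ hAlt')
      refine ⟨Q, hQT, ?_⟩
      apply sort_inj
      rw [sort_Fm ha hab hQT, hsortQ, hmap, hl, hx, hy]
  · rintro (rfl | ⟨b, ⟨hb1, hbk⟩, a, ⟨ha1, hab⟩, Q, hQ, rfl⟩)
    · apply mem_Tk.2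
      rw [Finset.sort_empty]
      exact ⟨List.Pairwise.nil, by simp, fun i h => by simp at h, Even.zero⟩
    · apply mem_Tk.2
      rw [sort_Fm ha1 hab hQ]
      exact AltL.cons' ha1 hab hbk (mem_Tk.1 hQ)

lemma mem_img_sort {k b a : ℕ} {P : Finset ℕ}
    (ha : 1 ≤ a) (hab : a ≤ b)
    (h : P ∈ (Tk (k - b)).image (Fm b a)) :
    ∃ r, P.sort (· ≤ ·) = (2 * a - 1) :: (2 * b) :: r := by
  obtain ⟨Q, hQ, rfl⟩ := Finset.mem_image.1 h
  exact ⟨_, sort_Fm ha hab hQ⟩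

lemma Tk_card (k : ℕ) :
    (Tk k).card = 1 + ∑ b ∈ Finset.Icc 1 k, b * (Tk (k - b)).card := by
  have hinner : ∀ b ∈ Finset.Icc 1 k,
      ((Finset.Icc 1 b).biUnion fun a => (Tk (k - b)).image (Fm b a)).card
        = b * (Tk (k - b)).card := by
    intro b hb
    rw [Finset.mem_Icc] at hb
    have hdisj : ∀ a ∈ Finset.Icc 1 b, ∀ a' ∈ Finset.Icc 1 b, a ≠ a' →
        Disjoint ((Tk (k - b)).image (Fm b a)) ((Tk (k - b)).image (Fm b a')) := by
      intro a ha a' ha' hne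
      rw [Finset.mem_Icc] at ha ha'
      rw [Finset.disjoint_left]
      intro P hP hP'
      obtain ⟨r, hr⟩ := mem_img_sort ha.1 ha.2 hP
      obtain ⟨r', hr'⟩ := mem_img_sort ha'.1 ha'.2 hP'
      rw [hr] at hr'
      simp only [List.cons.injEq] at hr'
      exact hne (by omega)
    have himg : ∀ a ∈ Finset.Icc 1 b,
        ((Tk (k - b)).image (Fm b a)).card = (Tk (k - b)).card := by
      intro a ha
      rw [Finset.mem_Icc] at ha
      apply Finset.card_image_of_injOn
      intro Q hQ Q' hQ' hFF
      apply sort_inj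
      have h1 := sort_Fm (k := k - b) ha.1 ha.2 hQ
      have h2 := sort_Fm (k := k - b) ha.1 ha.2 hQ'
      rw [hFF, h2] at h1
      simp only [List.cons.injEq] at h1
      exact List.map_injective_iff.2 (fun u v huv => by omega) h1.2.2.symm
    rw [Finset.card_biUnion hdisj, Finset.sum_congr rfl himg, Finset.sum_const,
      Nat.card_Icc, smul_eq_mul]
    congr 1
  have hdisj2 : ∀ b ∈ Finset.Icc 1 k, ∀ b' ∈ Finset.Icc 1 k, b ≠ b' →
      Disjoint ((Finset.Icc 1 b).biUnion fun a => (Tk (k - b)).image (Fm b a))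
        ((Finset.Icc 1 b').biUnion fun a => (Tk (k - b')).image (Fm b' a)) := by
    intro b hb b' hb' hne
    rw [Finset.mem_Icc] at hb hb'
    rw [Finset.disjoint_left]
    intro P hP hP'
    rw [Finset.mem_biUnion] at hP hP'
    obtain ⟨a, ha, hP⟩ := hP
    obtain ⟨a', ha', hP'⟩ := hP'
    rw [Finset.mem_Icc] at ha ha'
    obtain ⟨r, hr⟩ := mem_img_sort ha.1 ha.2 hP
    obtain ⟨r', hr'⟩ := mem_img_sort ha'.1 ha'.2 hP'
    rw [hr] at hr'
    simp only [List.cons.injEq] at hr'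
    exact hne (by omega)
  have hnot : (∅ : Finset ℕ) ∉ (Finset.Icc 1 k).biUnion
      (fun b => (Finset.Icc 1 b).biUnion fun a => (Tk (k - b)).image (Fm b a)) := by
    intro hmem
    rw [Finset.mem_biUnion] at hmem
    obtain ⟨b, hb, hmem⟩ := hmem
    rw [Finset.mem_biUnion] at hmem
    obtain ⟨a, ha, hmem⟩ := hmem
    obtain ⟨Q, hQ, hFQ⟩ := Finset.mem_image.1 hmem
    have : 2 * a - 1 ∈ (∅ : Finset ℕ) := hFQ ▸ Finset.mem_insert_self _ _
    simp at this
  rw [Tk_eq k, Finset.card_insert_of_notMem hnot, Finset.card_biUnion hdisj2,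
    Finset.sum_congr rfl hinner, Nat.add_comm]

lemma Mcount_eq (k : ℕ) : Mcount k = (Tk k).card := by
  rw [Mcount]
  rw [Nat.card_congr (Equiv.subtypeEquivRight
    (fun P => (pa_iff (2 * k) P).trans mem_Tk.symm))]
  exact Nat.card_eq_finsetCard _

lemma Mcount_rec (k : ℕ) (hk : 1 ≤ k) :
    Mcount k = 1 + ∑ i ∈ Finset.Icc 1 k, i * Mcount (k - i) := by
  rw [Mcount_eq, Tk_card]
  congr 1
  exact Finset.sum_congr rfl fun i hi => by rw [Mcount_eq]

lemma Mcount_zero : Mcount 0 = 1 := by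
  rw [Mcount_eq, Tk_zero, Finset.card_singleton]

end Aux

theorem stmt_12 :
    (Mcount 0 = 1 ∧
      ∀ k, 1 ≤ k → Mcount k = 1 + ∑ i ∈ Finset.Icc 1 k, i * Mcount (k - i)) ∧
    ∀ N : ℕ → ℕ, N 0 = 1 →
      (∀ k, 1 ≤ k → N k = 1 + ∑ i ∈ Finset.Icc 1 k, i * N (k - i)) →
      ∀ k, Mcount k = N k := by
  refine ⟨⟨Mcount_zero, fun k hk => Mcount_rec k hk⟩, ?_⟩
  intro N h0 hrec k
  induction k using Nat.strong_induction_on with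
  | _ k ih =>
    match k with
    | 0 => rw [Mcount_zero, h0]
    | (k + 1) =>
      rw [Mcount_rec (k + 1) (by omega), hrec (k + 1) (by omega)]
      congr 1
      refine Finset.sum_congr rfl fun i hi => ?_
      rw [Finset.mem_Icc] at hi
      rw [ih (k + 1 - i) (by omega)]
end

section
/- Call a finite subset P of {1, 2, ..., n} parity-alternating if, when its elements are listed in increasing order p_1 < p_2 < ... < p_m, one has p_j ≡ j (mod 2) for every j. Then for every k ≥ 0, the number of parity-alternating subsets of {1, 2, ..., 2k+1} of odd cardinality is odd if and only if k mod 3 ≠ 2. -/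
instance (n : ℕ) (P : Finset ℕ) : Decidable (ParityAlternating n P) := by
  unfold ParityAlternating; infer_instance

lemma sort_erase_max (P : Finset ℕ) (a : ℕ) (ha : a ∈ P) (hmax : ∀ x ∈ P, x ≤ a) :
    P.sort (· ≤ ·) = (P.erase a).sort (· ≤ ·) ++ [a] := by
  have hperm : ((P.erase a).sort (· ≤ ·) ++ [a]).Perm (P.sort (· ≤ ·)) := by
    rw [← Multiset.coe_eq_coe]
    show ((P.erase a).sort (· ≤ ·) : Multiset ℕ) + ([a] : List ℕ) = _
    rw [Finset.sort_eq, Finset.sort_eq, Finset.erase_val, Multiset.coe_singleton,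
      add_comm, Multiset.singleton_add]
    exact Multiset.cons_erase ha
  have hs1 : List.Pairwise (· ≤ ·) ((P.erase a).sort (· ≤ ·) ++ [a]) := by
    rw [List.pairwise_append]
    refine ⟨Finset.pairwise_sort _ _, List.pairwise_singleton _ a, ?_⟩
    intro x hx y hy
    rw [List.mem_singleton] at hy
    subst hy
    rw [Finset.mem_sort] at hx
    exact hmax x (Finset.mem_of_mem_erase hx)
  exact (hperm.eq_of_pairwise' hs1 (Finset.pairwise_sort _ _)).symm

lemma pa_mem (n : ℕ) (P : Finset ℕ) (h : n + 1 ∈ P) :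
    ParityAlternating (n + 1) P ↔
      ParityAlternating n (P.erase (n + 1)) ∧ (n + 1) % 2 = P.card % 2 := by
  set m := ((P.erase (n+1)).sort (· ≤ ·)).length with hm
  have hmcard : m = (P.erase (n+1)).card := Finset.length_sort _
  have hcard : P.card = m + 1 := by
    rw [hmcard, Finset.card_erase_of_mem h]
    have : 0 < P.card := Finset.card_pos.mpr ⟨_, h⟩
    omega
  constructor
  · rintro ⟨hsub, hcond⟩
    have hmax : ∀ x ∈ P, x ≤ n + 1 := by
      intro x hx; exact (Finset.mem_Icc.mp (hsub hx)).2
    have hsort := sort_erase_max P (n+1) h hmax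
    have hlen : (P.sort (· ≤ ·)).length = m + 1 := by
      rw [hsort]; simp; exact hmcard.symm
    have hget : ∀ i : ℕ, ∀ hi : i < m + 1,
        (P.sort (· ≤ ·)).get ⟨i, by omega⟩ % 2 = (i + 1) % 2 := by
      intro i hi; exact hcond ⟨i, by omega⟩
    refine ⟨⟨?_, ?_⟩, ?_⟩
    · intro x hx
      have hx' := Finset.mem_of_mem_erase hx
      have hne := Finset.ne_of_mem_erase hx
      have := Finset.mem_Icc.mp (hsub hx')
      rw [Finset.mem_Icc]; omega
    · intro j
      have h1 := hget j.1 (by omega)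
      have h2 : (P.sort (· ≤ ·)).get ⟨j.1, by omega⟩ =
          ((P.erase (n+1)).sort (· ≤ ·)).get j := by
        simp only [List.get_eq_getElem, hsort]
        exact List.getElem_append_left j.isLt
      rw [h2] at h1; exact h1
    · have h1 := hget m (by omega)
      have h2 : (P.sort (· ≤ ·)).get ⟨m, by omega⟩ = n + 1 := by
        simp only [List.get_eq_getElem, hsort]
        exact List.getElem_concat_length rfl _
      rw [h2] at h1; omega
  · rintro ⟨⟨hsub', hcond'⟩, hpar⟩
    have hsub : P ⊆ Finset.Icc 1 (n + 1) := by
      intro x hx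
      by_cases hxe : x = n + 1
      · subst hxe; rw [Finset.mem_Icc]; omega
      · have := Finset.mem_Icc.mp (hsub' (Finset.mem_erase.mpr ⟨hxe, hx⟩))
        rw [Finset.mem_Icc]; omega
    have hmax : ∀ x ∈ P, x ≤ n + 1 := by
      intro x hx; exact (Finset.mem_Icc.mp (hsub hx)).2
    have hsort := sort_erase_max P (n+1) h hmax
    have hlen : (P.sort (· ≤ ·)).length = m + 1 := by
      rw [hsort]; simp; exact hmcard.symm
    refine ⟨hsub, ?_⟩
    intro j
    have hj : j.1 < m + 1 := by omega
    rcases Nat.lt_or_ge j.1 m with hjm | hjm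
    · have h2 : (P.sort (· ≤ ·)).get j = ((P.erase (n+1)).sort (· ≤ ·)).get ⟨j.1, hjm⟩ := by
        simp only [List.get_eq_getElem, hsort]
        exact List.getElem_append_left hjm
      rw [h2]; exact hcond' ⟨j.1, hjm⟩
    · have hjm' : j.1 = m := by omega
      have h2 : (P.sort (· ≤ ·)).get j = n + 1 := by
        simp only [List.get_eq_getElem, hsort]
        exact List.getElem_concat_length hjm' _
      rw [h2, hjm']; omega

lemma pa_not_mem (n : ℕ) (P : Finset ℕ) (h : n + 1 ∉ P) :
    ParityAlternating (n + 1) P ↔ ParityAlternating n P := by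
  constructor
  · rintro ⟨hsub, hcond⟩
    refine ⟨?_, hcond⟩
    intro x hx
    have := Finset.mem_Icc.mp (hsub hx)
    have : x ≠ n + 1 := fun he => h (he ▸ hx)
    rw [Finset.mem_Icc]; omega
  · rintro ⟨hsub, hcond⟩
    refine ⟨hsub.trans (Finset.Icc_subset_Icc_right (by omega)), hcond⟩

def paF (n : ℕ) : Finset (Finset ℕ) :=
  (Finset.Icc 1 n).powerset.filter (fun P => ParityAlternating n P)

lemma mem_paF {n : ℕ} {P : Finset ℕ} : P ∈ paF n ↔ ParityAlternating n P := by
  simp only [paF, Finset.mem_filter, Finset.mem_powerset, and_iff_right_iff_imp]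
  exact fun h => h.1

def aC (n : ℕ) : ℕ := ((paF n).filter (fun P => P.card % 2 = 1)).card
def bC (n : ℕ) : ℕ := ((paF n).filter (fun P => P.card % 2 = 0)).card

lemma top_card (n r : ℕ) :
    (((paF (n+1)).filter (fun P => P.card % 2 = r)).filter (fun P => n + 1 ∈ P)).card
      = if (n + 1) % 2 = r then ((paF n).filter (fun P => P.card % 2 = n % 2)).card else 0 := by
  by_cases hr : (n + 1) % 2 = r
  · rw [if_pos hr]
    apply Finset.card_bij (fun P _ => P.erase (n + 1))
    · intro P hP
      simp only [Finset.mem_filter] at hP ⊢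
      obtain ⟨⟨hPf, hPc⟩, hPm⟩ := hP
      rw [mem_paF] at hPf
      rw [pa_mem n P hPm] at hPf
      refine ⟨mem_paF.mpr hPf.1, ?_⟩
      rw [Finset.card_erase_of_mem hPm]
      have : 0 < P.card := Finset.card_pos.mpr ⟨_, hPm⟩
      omega
    · intro P hP Q hQ hePQ
      simp only [Finset.mem_filter] at hP hQ
      rw [← Finset.insert_erase hP.2, ← Finset.insert_erase hQ.2, hePQ]
    · intro Q hQ
      simp only [Finset.mem_filter] at hQ
      obtain ⟨hQf, hQc⟩ := hQ
      rw [mem_paF] at hQf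
      have hQn : n + 1 ∉ Q := by
        intro hx
        have := Finset.mem_Icc.mp (hQf.1 hx); omega
      refine ⟨insert (n+1) Q, ?_, by rw [Finset.erase_insert hQn]⟩
      have hmem : n + 1 ∈ insert (n+1) Q := Finset.mem_insert_self _ _
      have hcard : (insert (n+1) Q).card = Q.card + 1 := Finset.card_insert_of_notMem hQn
      simp only [Finset.mem_filter]
      refine ⟨⟨mem_paF.mpr ?_, by omega⟩, hmem⟩
      rw [pa_mem n _ hmem, Finset.erase_insert hQn]
      exact ⟨hQf, by omega⟩
  · rw [if_neg hr]
    rw [Finset.card_eq_zero, Finset.filter_eq_empty_iff]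
    intro P hP
    simp only [Finset.mem_filter] at hP
    obtain ⟨hPf, hPc⟩ := hP
    rw [mem_paF] at hPf
    intro hPm
    rw [pa_mem n P hPm] at hPf
    omega

lemma no_top (n r : ℕ) :
    ((paF (n+1)).filter (fun P => P.card % 2 = r)).filter (fun P => n + 1 ∉ P)
      = (paF n).filter (fun P => P.card % 2 = r) := by
  ext P
  simp only [Finset.mem_filter, mem_paF]
  constructor
  · rintro ⟨⟨hPf, hPc⟩, hPm⟩
    exact ⟨(pa_not_mem n P hPm).mp hPf, hPc⟩
  · rintro ⟨hPf, hPc⟩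
    have hPm : n + 1 ∉ P := by
      intro hx; have := Finset.mem_Icc.mp (hPf.1 hx); omega
    exact ⟨⟨(pa_not_mem n P hPm).mpr hPf, hPc⟩, hPm⟩

lemma split_count (n r : ℕ) :
    ((paF (n+1)).filter (fun P => P.card % 2 = r)).card
      = (if (n + 1) % 2 = r then ((paF n).filter (fun P => P.card % 2 = n % 2)).card else 0)
        + ((paF n).filter (fun P => P.card % 2 = r)).card := by
  rw [← top_card n r, ← no_top n r]
  exact (Finset.card_filter_add_card_filter_not (fun P => n + 1 ∈ P)).symm

lemma pa_cond_iff (P : Finset ℕ) :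
    (∀ j : Fin (P.sort (· ≤ ·)).length, (P.sort (· ≤ ·)).get j % 2 = (j.val + 1) % 2) ↔
    (∀ i : ℕ, ∀ h : i < (P.sort (· ≤ ·)).length, (P.sort (· ≤ ·)).get ⟨i, h⟩ % 2 = (i + 1) % 2) :=
  ⟨fun h i hi => h ⟨i, hi⟩, fun h j => h j.1 j.2⟩

lemma paF_one : paF 1 = {∅, {1}} := by
  have h0 : ParityAlternating 1 ∅ := by
    refine ⟨by simp, (pa_cond_iff _).mpr ?_⟩
    intro i hi
    simp [Finset.sort_empty] at hi
  have h1 : ParityAlternating 1 {1} := by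
    refine ⟨by simp, (pa_cond_iff _).mpr ?_⟩
    intro i hi
    have hi' : i < 1 := by simpa using hi
    have hi0 : i = 0 := by omega
    subst hi0
    simp
  ext P
  simp only [paF, Finset.mem_filter, Finset.mem_powerset, Finset.Icc_self,
    Finset.subset_singleton_iff, Finset.mem_insert, Finset.mem_singleton]
  constructor
  · rintro ⟨h, -⟩; exact h
  · rintro (rfl | rfl)
    · exact ⟨Or.inl rfl, h0⟩
    · exact ⟨Or.inr rfl, h1⟩

lemma aC_one : aC 1 = 1 := by rw [aC, paF_one]; decide
lemma bC_one : bC 1 = 1 := by rw [bC, paF_one]; decide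

lemma step_rec (k : ℕ) :
    aC (2*(k+1)+1) = 2 * aC (2*k+1) + bC (2*k+1) ∧
    bC (2*(k+1)+1) = aC (2*k+1) + bC (2*k+1) := by
  have e1 := split_count (2*k+1) 1
  have e0 := split_count (2*k+1) 0
  have f1 := split_count (2*k+1+1) 1
  have f0 := split_count (2*k+1+1) 0
  simp only [show (2*k+1) % 2 = 1 from by omega, show (2*k+1+1) % 2 = 0 from by omega,
    show (2*k+1+1+1) % 2 = 1 from by omega] at e1 e0 f1 f0
  norm_num at e1 e0 f1 f0
  have hg : 2*(k+1)+1 = 2*k+1+1+1 := by ring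
  rw [hg]
  simp only [aC, bC] at *
  omega

lemma parity_pattern (k : ℕ) :
    (aC (2*k+1) % 2 = 0 ↔ k % 3 = 2) ∧ (bC (2*k+1) % 2 = 0 ↔ k % 3 = 1) := by
  induction k with
  | zero => rw [aC_one, bC_one]; omega
  | succ k ih =>
    obtain ⟨h1, h2⟩ := step_rec k
    omega

theorem stmt_13 :
    ∀ k : ℕ,
      Odd (Nat.card {P : Finset ℕ // ParityAlternating (2 * k + 1) P ∧ Odd P.card}) ↔
        k % 3 ≠ 2 := by
  intro k
  have hset : {P : Finset ℕ | ParityAlternating (2 * k + 1) P ∧ Odd P.card}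
      = ↑((paF (2*k+1)).filter (fun P => P.card % 2 = 1)) := by
    ext P
    simp only [Set.mem_setOf_eq, Finset.coe_filter, mem_paF, Nat.odd_iff, Set.mem_setOf_eq]
  have hcard : Nat.card {P : Finset ℕ // ParityAlternating (2 * k + 1) P ∧ Odd P.card}
      = aC (2*k+1) := by
    have h2 : Nat.card {P : Finset ℕ // ParityAlternating (2 * k + 1) P ∧ Odd P.card}
        = Set.ncard {P : Finset ℕ | ParityAlternating (2 * k + 1) P ∧ Odd P.card} :=
      (Nat.card_coe_set_eq _).symm
    rw [h2, hset, Set.ncard_coe_finset]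
    rfl
  rw [hcard, Nat.odd_iff]
  have := parity_pattern k
  omega
end

section
/- Call a finite subset P of {1, 2, ..., n} parity-alternating if, when its elements are listed in increasing order p_1 < p_2 < ... < p_m, one has p_j ≡ j (mod 2) for every j. Then for every k ≥ 0, the number of parity-alternating subsets of {1, 2, ..., 2k} of even cardinality (including the empty set) is odd if and only if k mod 3 ≠ 1. -/
def Qp (P : Finset ℕ) : Prop :=
  ∀ x ∈ P, x % 2 = (P.filter (fun y => y ≤ x)).card % 2

instance : DecidablePred Qp := fun _ => Finset.decidableDforallFinset

lemma list_filter_le_get {L : List ℕ} (h : L.Pairwise (· < ·)) (j : Fin L.length) :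
    (L.filter (fun y => y ≤ L.get j)).length = j.val + 1 := by
  induction L with
  | nil => exact absurd j.isLt (by simp)
  | cons a t ih =>
    rcases j with ⟨jv, hj⟩
    cases jv with
    | zero =>
      have ht : t.filter (fun y => decide (y ≤ a)) = [] := by
        apply List.filter_eq_nil_iff.2
        intro b hb
        have := (List.pairwise_cons.1 h).1 b hb
        simp only [decide_eq_true_eq]
        omega
      simp [List.filter, ht]
    | succ i =>
      have hs : t.Pairwise (· < ·) := (List.pairwise_cons.1 h).2
      have hi : i < t.length := by simpa using hj
      have key := ih hs ⟨i, hi⟩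
      have hag : a ≤ t.get ⟨i, hi⟩ :=
        le_of_lt ((List.pairwise_cons.1 h).1 _ (t.get_mem ⟨i, hi⟩))
      simp only [List.get, List.filter_cons]
      rw [if_pos (by simpa using hag)]
      simp only [List.length_cons]
      simpa using key

lemma card_filter_eq (P : Finset ℕ) (p : ℕ → Prop) [DecidablePred p] :
    (P.filter p).card = ((P.sort (· ≤ ·)).filter (fun y => p y)).length := by
  rw [((Finset.sort_perm_toList P (· ≤ ·)).filter _).length_eq]
  have h1 : (P.filter p).val = P.val.filter p := Finset.filter_val _ _
  have h2 : P.val = (P.toList : Multiset ℕ) := (Finset.coe_toList P).symm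
  rw [Finset.card, h1, h2, Multiset.filter_coe, Multiset.coe_card]

lemma pa_iff_s14 (n : ℕ) (P : Finset ℕ) :
    ParityAlternating n P ↔ P ⊆ Finset.Icc 1 n ∧ Qp P := by
  constructor
  · rintro ⟨hsub, hall⟩
    refine ⟨hsub, fun x hx => ?_⟩
    obtain ⟨j, hjx⟩ := List.mem_iff_get.1 ((Finset.mem_sort (· ≤ ·)).2 hx)
    rw [← hjx, hall j, card_filter_eq, list_filter_le_get (Finset.sortedLT_sort P).pairwise j]
  · rintro ⟨hsub, hq⟩
    refine ⟨hsub, fun j => ?_⟩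
    have hx : (P.sort (· ≤ ·)).get j ∈ P :=
      (Finset.mem_sort (· ≤ ·)).1 (List.get_mem _ _)
    rw [hq _ hx, card_filter_eq, list_filter_le_get (Finset.sortedLT_sort P).pairwise j]

def Cnt (n : ℕ) (r : ℕ) : ℕ :=
  ((Finset.Icc 1 n).powerset.filter (fun P => Qp P ∧ P.card % 2 = r)).card

lemma qp_insert {n : ℕ} {A : Finset ℕ} (hA : A ⊆ Finset.Icc 1 n) (hn : n + 1 ∉ A) :
    Qp (insert (n + 1) A) ↔ Qp A ∧ (n + 1) % 2 = (A.card + 1) % 2 := by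
  have hfilt : ∀ x ∈ A, (insert (n + 1) A).filter (fun y => y ≤ x)
      = A.filter (fun y => y ≤ x) := by
    intro x hx
    rw [Finset.filter_insert, if_neg]
    have := (Finset.mem_Icc.1 (hA hx)).2
    omega
  have htop : (insert (n + 1) A).filter (fun y => y ≤ n + 1) = insert (n + 1) A := by
    apply Finset.filter_true_of_mem
    intro y hy
    rcases Finset.mem_insert.1 hy with rfl | hy
    · exact le_rfl
    · have := (Finset.mem_Icc.1 (hA hy)).2; omega
  constructor
  · intro h
    refine ⟨fun x hx => ?_, ?_⟩
    · have := h x (Finset.mem_insert_of_mem hx)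
      rwa [hfilt x hx] at this
    · have := h (n + 1) (Finset.mem_insert_self _ _)
      rwa [htop, Finset.card_insert_of_notMem hn] at this
  · rintro ⟨hq, htp⟩ x hx
    rcases Finset.mem_insert.1 hx with rfl | hx
    · rw [htop, Finset.card_insert_of_notMem hn]; exact htp
    · rw [hfilt x hx]; exact hq x hx

lemma cnt_succ (n : ℕ) (r : ℕ) (hr : r < 2) :
    Cnt (n + 1) r = Cnt n r + if (n + 1) % 2 = r then Cnt n (1 - r) else 0 := by
  classical
  set p : Finset ℕ → Prop := fun P => Qp P ∧ P.card % 2 = r with hp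
  have hsplit :
      Cnt (n + 1) r
        = (((Finset.Icc 1 (n + 1)).powerset.filter p).filter (fun P => n + 1 ∉ P)).card
          + (((Finset.Icc 1 (n + 1)).powerset.filter p).filter (fun P => n + 1 ∈ P)).card := by
    rw [Cnt, ← Finset.card_filter_add_card_filter_not (p := fun P => n + 1 ∉ P)]
    simp [hp]
  rw [hsplit]
  congr 1
  · -- sets avoiding n+1
    rw [Cnt]
    congr 1
    ext P
    simp only [Finset.mem_filter, Finset.mem_powerset, hp]
    constructor
    · rintro ⟨⟨hPs, hq⟩, hnot⟩
      refine ⟨fun x hx => ?_, hq⟩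
      have h1 := Finset.mem_Icc.1 (hPs hx)
      have h2 : x ≠ n + 1 := fun h => hnot (h ▸ hx)
      rw [Finset.mem_Icc]
      omega
    · rintro ⟨hPs, hq⟩
      have hnot : n + 1 ∉ P := fun hmem => by
        have := (Finset.mem_Icc.1 (hPs hmem)).2; omega
      refine ⟨⟨fun x hx => ?_, hq⟩, hnot⟩
      have := Finset.mem_Icc.1 (hPs hx)
      rw [Finset.mem_Icc]; omega
  · -- sets containing n+1
    by_cases hpar : (n + 1) % 2 = r
    · rw [if_pos hpar, Cnt]
      apply Finset.card_nbij' (i := fun P => P.erase (n + 1)) (j := fun A => insert (n + 1) A)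
      · intro P hP
        simp only [Finset.mem_coe, Finset.mem_filter, Finset.mem_powerset, hp] at hP ⊢
        obtain ⟨⟨hPs, hq, hcard⟩, hmem⟩ := hP
        have hAs : P.erase (n + 1) ⊆ Finset.Icc 1 n := by
          intro x hx
          have hx1 := Finset.mem_of_mem_erase hx
          have hx2 := Finset.ne_of_mem_erase hx
          have := Finset.mem_Icc.1 (hPs hx1)
          rw [Finset.mem_Icc]; omega
        have hnotmem : n + 1 ∉ P.erase (n + 1) := Finset.notMem_erase _ _
        have hPi : insert (n + 1) (P.erase (n + 1)) = P := Finset.insert_erase hmem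
        have hq' := (qp_insert hAs hnotmem).1 (by rwa [hPi])
        have hcard' : (P.erase (n + 1)).card + 1 = P.card := by
          rw [← hPi, Finset.card_insert_of_notMem hnotmem, hPi]
        exact ⟨hAs, hq'.1, by omega⟩
      · intro A hA
        simp only [Finset.mem_coe, Finset.mem_filter, Finset.mem_powerset, hp] at hA ⊢
        obtain ⟨hAs, hq, hcard⟩ := hA
        have hnotmem : n + 1 ∉ A := fun hmem => by
          have := (Finset.mem_Icc.1 (hAs hmem)).2; omega
        have hsub : insert (n + 1) A ⊆ Finset.Icc 1 (n + 1) := by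
          intro x hx
          rcases Finset.mem_insert.1 hx with rfl | hx
          · rw [Finset.mem_Icc]; omega
          · have := Finset.mem_Icc.1 (hAs hx); rw [Finset.mem_Icc]; omega
        have hcardi : (insert (n + 1) A).card = A.card + 1 :=
          Finset.card_insert_of_notMem hnotmem
        refine ⟨⟨hsub, ?_, by omega⟩, Finset.mem_insert_self _ _⟩
        exact (qp_insert hAs hnotmem).2 ⟨hq, by omega⟩
      · intro P hP
        simp only [Finset.mem_coe, Finset.mem_filter] at hP
        exact Finset.insert_erase hP.2
      · intro A hA
        simp only [Finset.mem_coe, Finset.mem_filter, Finset.mem_powerset] at hA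
        have hnotmem : n + 1 ∉ A := fun hmem => by
          have := (Finset.mem_Icc.1 (hA.1 hmem)).2; omega
        exact Finset.erase_insert hnotmem
    · rw [if_neg hpar, Finset.card_eq_zero]
      apply Finset.eq_empty_of_forall_notMem
      intro P hP
      simp only [Finset.mem_filter, Finset.mem_powerset, hp] at hP
      obtain ⟨⟨hPs, hq, hcard⟩, hmem⟩ := hP
      have htop : P.filter (fun y => y ≤ n + 1) = P := by
        apply Finset.filter_true_of_mem
        intro y hy
        exact (Finset.mem_Icc.1 (hPs hy)).2
      have := hq (n + 1) hmem
      rw [htop] at this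
      omega

lemma cnt_zero : Cnt 0 0 = 1 ∧ Cnt 0 1 = 0 := by
  have h : Finset.Icc 1 0 = (∅ : Finset ℕ) := Finset.Icc_eq_empty (by omega)
  constructor <;>
  · rw [Cnt, h]
    decide

lemma cnt_parity (k : ℕ) :
    Cnt (2 * k) 0 % 2 = (if k % 3 = 1 then 0 else 1)
      ∧ Cnt (2 * k) 1 % 2 = (if k % 3 = 0 then 0 else 1) := by
  induction k with
  | zero => simp [cnt_zero.1, cnt_zero.2]
  | succ k ih =>
    obtain ⟨ih0, ih1⟩ := ih
    have h1 : 2 * (k + 1) = (2 * k + 1) + 1 := by ring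
    have e1 : Cnt (2 * k + 1) 0 = Cnt (2 * k) 0 := by
      rw [cnt_succ _ _ (by omega), if_neg (by omega)]; omega
    have e2 : Cnt (2 * k + 1) 1 = Cnt (2 * k) 1 + Cnt (2 * k) 0 := by
      rw [cnt_succ _ _ (by omega), if_pos (by omega)]
    have e3 : Cnt ((2 * k + 1) + 1) 0 = Cnt (2 * k + 1) 0 + Cnt (2 * k + 1) 1 := by
      rw [cnt_succ _ _ (by omega), if_pos (by omega)]
    have e4 : Cnt ((2 * k + 1) + 1) 1 = Cnt (2 * k + 1) 1 := by
      rw [cnt_succ _ _ (by omega), if_neg (by omega)]; omega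
    rw [h1, e3, e4, e1, e2]
    have h3 : k % 3 = 0 ∨ k % 3 = 1 ∨ k % 3 = 2 := by omega
    rcases h3 with h | h | h <;>
      · rw [h] at ih0 ih1
        have hk1 : (k + 1) % 3 = (k % 3 + 1) % 3 := by omega
        simp only [hk1, h] at *
        norm_num at *
        omega

theorem stmt_14 :
    ∀ k : ℕ,
      Odd (Nat.card {P : Finset ℕ // ParityAlternating (2 * k) P ∧ Even P.card}) ↔
        k % 3 ≠ 1 := by
  intro k
  have e : {P : Finset ℕ // ParityAlternating (2 * k) P ∧ Even P.card}
      ≃ {P : Finset ℕ // P ∈ (Finset.Icc 1 (2 * k)).powerset.filter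
          (fun P => Qp P ∧ P.card % 2 = 0)} := by
    apply Equiv.subtypeEquivRight
    intro P
    simp only [Finset.mem_filter, Finset.mem_powerset, pa_iff_s14, Nat.even_iff]
    tauto
  rw [Nat.card_congr e, Nat.card_eq_fintype_card, Fintype.card_coe]
  have := (cnt_parity k).1
  rw [Cnt] at this
  rw [Nat.odd_iff, this]
  by_cases h : k % 3 = 1 <;> simp [h]
end
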